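/- arXiv:1612.05127 — 8 statements merged into one kernel-verified Lean document; each statement's English description precedes it below -/
import Mathlib

section
/- Let Γ = (V,E) be a countable undirected graph without loops or multiple edges that is coconnected (i.e., its complement graph is connected) and has at least two vertices. Then every finite proper subset C of V admits a blocking path ending in any prescribed vertex, where a blocking path for C is a finite sequence of vertices w(1),…,w(n) ∈ V such that w(1) ∉ C, (w(k),w(k+1)) ∉ E for all 1 ≤ k ≤ n−1, and for every u ∈ C there exists 1 ≤ k ≤ n with (w(k),u) ∉ E. -/
open SimpleGraph

private lemma walk_through_list {V : Type*} {H : SimpleGraph V} (h : H.Preconnected) :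
    ∀ (l : List V) (v z : V), ∃ p : H.Walk v z, ∀ u ∈ l, u ∈ p.support := by
  intro l
  induction l with
  | nil => exact fun v z => ⟨(h v z).some, by simp⟩
  | cons a l ih =>
    intro v z
    obtain ⟨q, hq⟩ := ih a z
    refine ⟨((h v a).some).append q, ?_⟩
    intro u hu
    rw [SimpleGraph.Walk.mem_support_append_iff]
    rcases List.mem_cons.mp hu with rfl | hu
    · exact Or.inl (SimpleGraph.Walk.end_mem_support _)
    · exact Or.inr (hq u hu)

/-- Lemma 2.2: in a coconnected countable graph with at least two vertices, every finite
proper subset `C` of the vertices admits a blocking path ending in any prescribed vertex. -/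
theorem blocking_paths_in_coconnected_graphs {V : Type*} [Countable V] [Nontrivial V]
    (G : SimpleGraph V) (hcc : Gᶜ.Connected)
    (C : Finset V) (hC : ∃ v : V, v ∉ C) (z : V) :
    ∃ (n : ℕ) (w : Fin (n + 1) → V),
      w 0 ∉ C ∧
      (∀ k : Fin n, ¬ G.Adj (w k.castSucc) (w k.succ)) ∧
      (∀ u ∈ C, ∃ k : Fin (n + 1), ¬ G.Adj (w k) u) ∧
      w (Fin.last n) = z := by
  obtain ⟨v, hv⟩ := hC
  obtain ⟨p, hp⟩ := walk_through_list hcc.preconnected C.toList v z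
  refine ⟨p.length, fun k => p.getVert k, ?_, ?_, ?_, ?_⟩
  · simpa using hv
  · intro k
    have hadj : Gᶜ.Adj (p.getVert k) (p.getVert (k + 1)) :=
      p.adj_getVert_succ k.isLt
    rw [SimpleGraph.compl_adj] at hadj
    simpa [Fin.coe_castSucc, Fin.val_succ] using hadj.2
  · intro u hu
    have hmem : u ∈ p.support := hp u (Finset.mem_toList.mpr hu)
    obtain ⟨m, hm, hml⟩ := SimpleGraph.Walk.mem_support_iff_exists_getVert.mp hmem
    refine ⟨⟨m, Nat.lt_succ_of_le hml⟩, ?_⟩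
    simp [hm]
  · simp [Fin.last]
end

section
/- Let (Sᵢ)_{i∈I} be a family of right LCM monoids and S = ⊕_{i∈I} Sᵢ. Then the core subsemigroup of S is the direct sum of the cores: S_c = ⊕_{i∈I} (Sᵢ)_c, where S_c = { a ∈ S : aS ∩ sS ≠ ∅ for all s ∈ S }. -/
section RightLCMBasics
variable (S : Type*) [Monoid S]

/-- The principal right ideal `sS`. -/
def pIdeal {S : Type*} [Monoid S] (s : S) : Set S := Set.range (fun r => s * r)

/-- `s ⊥ t` : the principal right ideals are disjoint. -/
def Orth {S : Type*} [Monoid S] (s t : S) : Prop := pIdeal s ∩ pIdeal t = ∅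

/-- Left cancellativity. -/
def LeftCancellative : Prop := ∀ a b c : S, a * b = a * c → b = c

/-- Right LCM property: intersections of principal right ideals are empty or principal. -/
def IsRightLCM : Prop :=
  ∀ s t : S, pIdeal s ∩ pIdeal t = ∅ ∨ ∃ r : S, pIdeal s ∩ pIdeal t = pIdeal r

/-- The core subsemigroup `S_c`. -/
def core : Set S := {a | ∀ s : S, ¬ Orth a s}

/-- The core relation `s ∼ t` : `sa = tb` for some core elements `a, b`. -/
def coreRel {S : Type*} [Monoid S] (s t : S) : Prop :=
  ∃ a ∈ core S, ∃ b ∈ core S, s * a = t * b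

/-- A (finite) foundation set. -/
def IsFoundationSet {S : Type*} [Monoid S] (F : Set S) : Prop :=
  F.Finite ∧ ∀ s : S, ∃ f ∈ F, ¬ Orth f s

/-- Accuracy: distinct elements are mutually orthogonal. -/
def Accurate {S : Type*} [Monoid S] (F : Set S) : Prop :=
  ∀ f ∈ F, ∀ g ∈ F, f ≠ g → Orth f g

/-- Property (AR): every foundation set admits an accurate refinement. -/
def HasAR : Prop :=
  ∀ F : Set S, IsFoundationSet F →
    ∃ F' : Set S, IsFoundationSet F' ∧ Accurate F' ∧
      F' ⊆ {x | ∃ f ∈ F, ∃ r : S, x = f * r}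

end RightLCMBasics

/-- The direct sum (restricted product) of a family of monoids, as the submonoid of
finitely supported elements of the full product. -/
def finSupp {I : Type*} (S : I → Type*) [∀ i, Monoid (S i)] : Submonoid (∀ i, S i) where
  carrier := {f | {i | f i ≠ 1}.Finite}
  one_mem' := by simp
  mul_mem' := by
    intro a b ha hb
    refine (ha.union hb).subset ?_
    intro i hi
    by_contra h
    simp only [Set.mem_union, Set.mem_setOf_eq, not_or, not_not] at h
    exact hi (by simp [Pi.mul_apply, h.1, h.2])

lemma notOrth {T : Type*} [Monoid T] (s t : T) :
    ¬ Orth s t ↔ ∃ a b, s * a = t * b := by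
  unfold Orth pIdeal
  rw [← Set.not_nonempty_iff_eq_empty, not_not]
  constructor
  · rintro ⟨x, ⟨a, ha⟩, ⟨b, hb⟩⟩
    exact ⟨a, b, by simpa using ha.trans hb.symm⟩
  · rintro ⟨a, b, hab⟩
    exact ⟨s * a, ⟨a, rfl⟩, ⟨b, hab.symm⟩⟩

/-- Proposition 3.1(i), second part: the core of a direct sum of right LCM monoids is
the direct sum of the cores. -/
theorem core_of_direct_sum {I : Type*} (S : I → Type*) [∀ i, Monoid (S i)]
    (hlc : ∀ i, LeftCancellative (S i)) (hlcm : ∀ i, IsRightLCM (S i)) :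
    ∀ f : ↥(finSupp S), f ∈ core ↥(finSupp S) ↔ ∀ i : I, (f : ∀ i, S i) i ∈ core (S i) := by
  classical
  intro f
  constructor
  · intro hf i s
    have hg : Pi.mulSingle i s ∈ finSupp S := by
      apply Set.Finite.subset (Set.finite_singleton i)
      intro j hj
      simp only [Set.mem_setOf_eq] at hj
      by_contra h
      exact hj (Pi.mulSingle_eq_of_ne h s)
    have := (notOrth _ _).mp (hf ⟨Pi.mulSingle i s, hg⟩)
    obtain ⟨a, b, hab⟩ := this
    rw [notOrth]
    refine ⟨(a : ∀ i, S i) i, (b : ∀ i, S i) i, ?_⟩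
    have := congrArg (fun x : ↥(finSupp S) => (x : ∀ i, S i) i) hab
    simpa using this
  · intro hf g
    rw [notOrth]
    have hchoice : ∀ i, ∃ p : S i × S i, (f : ∀ i, S i) i * p.1 = (g : ∀ i, S i) i * p.2 ∧
        ((f : ∀ i, S i) i = 1 → (g : ∀ i, S i) i = 1 → p = 1) := by
      intro i
      by_cases h1 : (f : ∀ i, S i) i = 1 ∧ (g : ∀ i, S i) i = 1
      · exact ⟨1, by simp [h1.1, h1.2], fun _ _ => rfl⟩
      · obtain ⟨a, b, hab⟩ := (notOrth _ _).mp (hf i ((g : ∀ i, S i) i))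
        exact ⟨(a, b), hab, fun ha hb => absurd ⟨ha, hb⟩ h1⟩
    choose p hp1 hp2 using hchoice
    have hsupp : {i | p i ≠ 1}.Finite := by
      apply Set.Finite.subset ((f.2).union (g.2))
      intro i hi
      simp only [Set.mem_setOf_eq] at hi
      by_contra h
      simp only [Set.mem_union, Set.mem_setOf_eq, not_or, not_not] at h
      exact hi (hp2 i h.1 h.2)
    have ha : (fun i => (p i).1) ∈ finSupp S := by
      apply hsupp.subset
      intro i hi
      simp only [Set.mem_setOf_eq] at hi ⊢
      intro h; rw [h] at hi; exact hi rfl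
    have hb : (fun i => (p i).2) ∈ finSupp S := by
      apply hsupp.subset
      intro i hi
      simp only [Set.mem_setOf_eq] at hi ⊢
      intro h; rw [h] at hi; exact hi rfl
    refine ⟨⟨_, ha⟩, ⟨_, hb⟩, ?_⟩
    ext i
    exact hp1 i
end

section
/- Let (Sᵢ)_{i∈I} be a family of right LCM monoids and S = ⊕_{i∈I} Sᵢ. Two elements s = (sᵢ), t = (tᵢ) of S are core related (i.e., sa = tb for some a,b ∈ S_c) if and only if for every i ∈ I the components sᵢ and tᵢ are core related in Sᵢ. -/
lemma notOrth_iff {S : Type*} [Monoid S] (a s : S) :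
    ¬ Orth a s ↔ ∃ r r' : S, a * r = s * r' := by
  unfold Orth pIdeal
  rw [← ne_eq, ← Set.nonempty_iff_ne_empty]
  constructor
  · rintro ⟨x, ⟨r, hr⟩, ⟨r', hr'⟩⟩; exact ⟨r, r', hr.trans hr'.symm⟩
  · rintro ⟨r, r', h⟩; exact ⟨a * r, ⟨r, rfl⟩, ⟨r', h.symm⟩⟩

lemma one_mem_core {S : Type*} [Monoid S] : (1 : S) ∈ core S := by
  intro s
  exact (notOrth_iff 1 s).mpr ⟨s, 1, by simp⟩

open Classical in
lemma mem_core_finSupp_iff {I : Type*} (S : I → Type*) [∀ i, Monoid (S i)]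
    (a : ↥(finSupp S)) :
    a ∈ core ↥(finSupp S) ↔ ∀ i, (a : ∀ i, S i) i ∈ core (S i) := by
  constructor
  · intro h i si
    have hmem : Pi.mulSingle i si ∈ finSupp S := by
      refine Set.Finite.subset (Set.finite_singleton i) ?_
      intro j hj
      by_contra hji
      exact hj (Pi.mulSingle_eq_of_ne (by simpa using hji) si)
    obtain ⟨r, r', hrr⟩ := (notOrth_iff a ⟨_, hmem⟩).mp (h ⟨_, hmem⟩)
    refine (notOrth_iff _ _).mpr ⟨(r : ∀ i, S i) i, (r' : ∀ i, S i) i, ?_⟩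
    have := congrFun (congrArg (Subtype.val) hrr) i
    simpa [Pi.mulSingle_eq_same] using this
  · intro h s
    have key : ∀ i, ∃ p : S i × S i,
        (a : ∀ j, S j) i * p.1 = (s : ∀ j, S j) i * p.2 ∧
        ((a : ∀ j, S j) i = 1 → (s : ∀ j, S j) i = 1 → p = 1) := by
      intro i
      by_cases hc : (a : ∀ j, S j) i = 1 ∧ (s : ∀ j, S j) i = 1
      · exact ⟨1, by simp [hc.1, hc.2], fun _ _ => rfl⟩
      · obtain ⟨r, r', hrr⟩ := (notOrth_iff _ _).mp (h i ((s : ∀ j, S j) i))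
        exact ⟨(r, r'), hrr, fun h1 h2 => absurd ⟨h1, h2⟩ hc⟩
    choose p hp hp1 using key
    have hsupp : ∀ (q : ∀ i, S i × S i), (∀ i, q i = p i) →
        {i | (fun j => (q j).1) i ≠ 1}.Finite ∧ {i | (fun j => (q j).2) i ≠ 1}.Finite := by
      intro q hq
      constructor <;>
      · refine Set.Finite.subset (a.2.union s.2) ?_
        intro i hi
        by_contra hni
        simp only [Set.mem_union, Set.mem_setOf_eq, not_or, not_not] at hni
        have := hp1 i hni.1 hni.2
        exact hi (by simp [hq i, this])
    obtain ⟨h1, h2⟩ := hsupp p (fun _ => rfl)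
    refine (notOrth_iff _ _).mpr ⟨⟨fun i => (p i).1, h1⟩, ⟨fun i => (p i).2, h2⟩, ?_⟩
    ext i
    exact hp i

open Classical in
/-- Proposition 3.1(ii): two elements of a direct sum of right LCM monoids are core
related iff they are componentwise core related. -/
theorem coreRel_of_direct_sum {I : Type*} (S : I → Type*) [∀ i, Monoid (S i)]
    (hlc : ∀ i, LeftCancellative (S i)) (hlcm : ∀ i, IsRightLCM (S i)) :
    ∀ f g : ↥(finSupp S),
      coreRel f g ↔ ∀ i : I, coreRel ((f : ∀ i, S i) i) ((g : ∀ i, S i) i) := by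
  intro f g
  constructor
  · rintro ⟨a, ha, b, hb, hab⟩ i
    refine ⟨(a : ∀ j, S j) i, (mem_core_finSupp_iff S a).mp ha i,
            (b : ∀ j, S j) i, (mem_core_finSupp_iff S b).mp hb i, ?_⟩
    exact congrFun (congrArg Subtype.val hab) i
  · intro h
    have key : ∀ i, ∃ p : S i × S i,
        p.1 ∈ core (S i) ∧ p.2 ∈ core (S i) ∧
        (f : ∀ j, S j) i * p.1 = (g : ∀ j, S j) i * p.2 ∧
        ((f : ∀ j, S j) i = 1 → (g : ∀ j, S j) i = 1 → p = 1) := by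
      intro i
      by_cases hc : (f : ∀ j, S j) i = 1 ∧ (g : ∀ j, S j) i = 1
      · exact ⟨1, one_mem_core, one_mem_core, by simp [hc.1, hc.2], fun _ _ => rfl⟩
      · obtain ⟨a, ha, b, hb, hab⟩ := h i
        exact ⟨(a, b), ha, hb, hab, fun h1 h2 => absurd ⟨h1, h2⟩ hc⟩
    choose p hpa hpb hp hp1 using key
    have hsupp : ∀ (pr : ∀ i, S i → S i × S i → S i), (∀ i x, pr i x 1 = 1) →
        {i | (fun j => pr j ((f : ∀ k, S k) j) (p j)) i ≠ 1}.Finite := by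
      intro pr hpr
      refine Set.Finite.subset (f.2.union g.2) ?_
      intro i hi
      by_contra hni
      simp only [Set.mem_union, Set.mem_setOf_eq, not_or, not_not] at hni
      have := hp1 i hni.1 hni.2
      simp only [Set.mem_setOf_eq, this, hpr] at hi
      exact hi rfl
    have h1 : {i | (fun j => (p j).1) i ≠ 1}.Finite := by
      simpa using hsupp (fun i _ q => q.1) (fun _ _ => rfl)
    have h2 : {i | (fun j => (p j).2) i ≠ 1}.Finite := by
      simpa using hsupp (fun i _ q => q.2) (fun _ _ => rfl)
    refine ⟨⟨fun i => (p i).1, h1⟩, ?_, ⟨fun i => (p i).2, h2⟩, ?_, ?_⟩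
    · exact (mem_core_finSupp_iff S _).mpr (fun i => hpa i)
    · exact (mem_core_finSupp_iff S _).mpr (fun i => hpb i)
    · ext i
      exact hp i
end

section
/- Let (Sᵢ)_{i∈I} be a family of right LCM monoids and S = ⊕_{i∈I} Sᵢ. If S has the accurate refinement property (property (AR)), then each Sᵢ has property (AR). -/
section ARAux

private lemma ar_not_orth_iff {T : Type*} [Monoid T] {s t : T} :
    ¬ Orth s t ↔ ∃ c d, s * c = t * d := by
  unfold Orth
  rw [← Ne, ← Set.nonempty_iff_ne_empty]
  constructor
  · rintro ⟨z, ⟨c, hc⟩, ⟨d, hd⟩⟩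
    exact ⟨c, d, hc.trans hd.symm⟩
  · rintro ⟨c, d, h⟩
    exact ⟨s * c, ⟨c, rfl⟩, ⟨d, h.symm⟩⟩

private lemma ar_mem_pIdeal {T : Type*} [Monoid T] {s z : T} :
    z ∈ pIdeal s ↔ ∃ r, s * r = z := Iff.rfl

variable {I : Type*} (S : I → Type*) [∀ i, Monoid (S i)] (i : I)
  (F' : Set ↥(finSupp S))

/-- The set of elements of `F'` whose `i`-th component is non-orthogonal to `s`. -/
def arV (s : S i) : Set ↥(finSupp S) :=
  {w | w ∈ F' ∧ ∃ c d : S i, w.1 i * c = s * d}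

/-- `u` is stable if deepening it does not change its covering set. -/
def arStable (u : S i) : Prop := ∀ q : S i, arV S i F' (u * q) = arV S i F' u

lemma arV_mono (s q : S i) : arV S i F' (s * q) ⊆ arV S i F' s := by
  rintro w ⟨hwF, c, d, h⟩
  exact ⟨hwF, c, q * d, by rw [h, mul_assoc]⟩

lemma exists_arStable (hfin : F'.Finite) (s : S i) : ∃ q, arStable S i F' (s * q) := by
  suffices H : ∀ (n : ℕ) (s : S i), (arV S i F' s).ncard ≤ n →
      ∃ q, arStable S i F' (s * q) from H _ s le_rfl
  intro n
  induction n with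
  | zero =>
    intro s hs
    by_cases h : arStable S i F' s
    · exact ⟨1, by rwa [mul_one]⟩
    · exfalso
      simp only [arStable] at h
      push_neg at h
      obtain ⟨q, hq⟩ := h
      have hlt := Set.ncard_lt_ncard ((arV_mono S i F' s q).ssubset_of_ne hq)
        (hfin.subset (fun w hw => hw.1))
      omega
  | succ n ih =>
    intro s hs
    by_cases h : arStable S i F' s
    · exact ⟨1, by rwa [mul_one]⟩
    · simp only [arStable] at h
      push_neg at h
      obtain ⟨q, hq⟩ := h
      have hlt := Set.ncard_lt_ncard ((arV_mono S i F' s q).ssubset_of_ne hq)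
        (hfin.subset (fun w hw => hw.1))
      obtain ⟨q', hq'⟩ := ih (s * q) (by omega)
      exact ⟨q * q', by rwa [← mul_assoc]⟩

lemma ar_chain {u : S i} (hu : arStable S i F' u) (B : Set ↥(finSupp S)) (hB : B.Finite) :
    B ⊆ arV S i F' u → ∃ r : S i, ∀ w ∈ B, ∃ c, u * r = w.1 i * c := by
  refine Set.Finite.induction_on
    (motive := fun B _ => B ⊆ arV S i F' u → ∃ r : S i, ∀ w ∈ B, ∃ c, u * r = w.1 i * c)
    B hB (fun _ => ⟨1, fun w hw => absurd hw (Set.notMem_empty w)⟩) ?_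
  intro a B' hnot hB' ih hins
  obtain ⟨r, hr⟩ := ih (fun w hw => hins (Set.mem_insert_of_mem _ hw))
  have haV : a ∈ arV S i F' (u * r) := by
    rw [hu r]; exact hins (Set.mem_insert _ _)
  obtain ⟨-, c, d, hcd⟩ := haV
  refine ⟨r * d, fun w hw => ?_⟩
  rcases Set.mem_insert_iff.mp hw with rfl | hwB
  · exact ⟨c, by rw [← mul_assoc]; exact hcd.symm⟩
  · obtain ⟨cw, hcw⟩ := hr w hwB
    exact ⟨cw * d, by rw [← mul_assoc, hcw, mul_assoc]⟩

lemma ar_lcm (hL : IsRightLCM (S i)) (hfin : F'.Finite) {u : S i}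
    (hu : arStable S i F' u) :
    ∃ r : S i, (⋂ w ∈ arV S i F' u, pIdeal (w.1 i)) = pIdeal r := by
  suffices H : ∀ (B : Set ↥(finSupp S)), B.Finite → B ⊆ arV S i F' u →
      ∃ r : S i, (⋂ w ∈ B, pIdeal (w.1 i)) = pIdeal r from
    H _ (hfin.subset (fun w hw => hw.1)) Set.Subset.rfl
  intro B hB
  refine Set.Finite.induction_on
    (motive := fun B _ => B ⊆ arV S i F' u →
      ∃ r : S i, (⋂ w ∈ B, pIdeal (w.1 i)) = pIdeal r)
    B hB ?_ ?_
  · intro _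
    refine ⟨1, ?_⟩
    ext z
    simp only [Set.mem_empty_iff_false, Set.iInter_of_empty, Set.iInter_univ,
      Set.mem_univ, true_iff, ar_mem_pIdeal]
    exact ⟨z, one_mul z⟩
  · intro a B' hnot hB' ih hins
    obtain ⟨rB, hrB⟩ := ih (fun w hw => hins (Set.mem_insert_of_mem _ hw))
    obtain ⟨rc, hrc⟩ := ar_chain S i F' hu (insert a B') (hB'.insert a) hins
    have hmem : u * rc ∈ pIdeal (a.1 i) ∩ pIdeal rB := by
      constructor
      · obtain ⟨c, hc⟩ := hrc a (Set.mem_insert _ _)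
        exact ar_mem_pIdeal.mpr ⟨c, hc.symm⟩
      · rw [← hrB]
        refine Set.mem_iInter₂.mpr fun w hw => ?_
        obtain ⟨c, hc⟩ := hrc w (Set.mem_insert_of_mem _ hw)
        exact ar_mem_pIdeal.mpr ⟨c, hc.symm⟩
    rcases hL (a.1 i) rB with hemp | ⟨r, hr⟩
    · rw [hemp] at hmem
      exact absurd hmem (Set.notMem_empty _)
    · exact ⟨r, by rw [Set.biInter_insert, hrB, hr]⟩

open Classical in
/-- A choice of right LCM of the `i`-th components of a set of elements. -/
noncomputable def arG (A : Set ↥(finSupp S)) : S i :=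
  if h : ∃ r : S i, (⋂ w ∈ A, pIdeal (w.1 i)) = pIdeal r then h.choose else 1

lemma arG_spec {A : Set ↥(finSupp S)}
    (h : ∃ r : S i, (⋂ w ∈ A, pIdeal (w.1 i)) = pIdeal r) :
    (⋂ w ∈ A, pIdeal (w.1 i)) = pIdeal (arG S i A) := by
  rw [arG]
  rw [dif_pos h]
  exact h.choose_spec

end ARAux

/-- Proposition 4.1: if a direct sum of right LCM monoids has property (AR), then so
does each summand. -/
theorem AR_of_direct_sum {I : Type*} (S : I → Type*) [∀ i, Monoid (S i)]
    (hlc : ∀ i, LeftCancellative (S i)) (hlcm : ∀ i, IsRightLCM (S i))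
    (hAR : HasAR ↥(finSupp S)) : ∀ i : I, HasAR (S i) := by
  classical
  intro i F hF
  obtain ⟨hFfin, hFcov⟩ := hF
  -- component extraction
  have hcomp : ∀ (x y : ↥(finSupp S)), x = y → ∀ j, x.1 j = y.1 j :=
    fun x y hxy j => by rw [hxy]
  -- updating a function at i stays finitely supported
  have hupdate_mem : ∀ (c : ↥(finSupp S)) (ci : S i),
      Function.update c.1 i ci ∈ finSupp S := by
    intro c ci
    have hc : {j | c.1 j ≠ 1}.Finite := c.2
    apply (hc.insert i).subset
    intro j hj
    simp only [Set.mem_setOf_eq] at hj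
    rcases eq_or_ne j i with rfl | hji
    · exact Set.mem_insert _ _
    · refine Set.mem_insert_of_mem _ ?_
      show c.1 j ≠ 1
      rwa [Function.update_of_ne hji] at hj
  -- splicing a coordinate-i witness with a tail witness
  have splice : ∀ w z : ↥(finSupp S),
      (∃ c d : S i, w.1 i * c = z.1 i * d) →
      (∃ c d : ↥(finSupp S), ∀ j, j ≠ i → w.1 j * c.1 j = z.1 j * d.1 j) →
      ∃ c d : ↥(finSupp S), w * c = z * d := by
    rintro w z ⟨ci, di, hi⟩ ⟨c, d, ht⟩
    refine ⟨⟨Function.update c.1 i ci, hupdate_mem c ci⟩,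
      ⟨Function.update d.1 i di, hupdate_mem d di⟩, ?_⟩
    apply Subtype.ext
    funext j
    show w.1 j * Function.update c.1 i ci j = z.1 j * Function.update d.1 i di j
    rcases eq_or_ne j i with rfl | hji
    · rwa [Function.update_self, Function.update_self]
    · rw [Function.update_of_ne hji, Function.update_of_ne hji]
      exact ht j hji
  -- the embedding of S i into the direct sum
  have hsingle_mem : ∀ s : S i, Pi.mulSingle i s ∈ finSupp S := by
    intro s
    apply (Set.finite_singleton i).subset
    intro j hj
    by_contra hji
    exact hj (Pi.mulSingle_eq_of_ne (by simpa using hji) s)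
  set ι : S i → ↥(finSupp S) := fun s => ⟨Pi.mulSingle i s, hsingle_mem s⟩ with hιdef
  have hι_same : ∀ s, (ι s).1 i = s := fun s => Pi.mulSingle_eq_same i s
  have hι_ne : ∀ s j, j ≠ i → (ι s).1 j = 1 := fun s j hj => Pi.mulSingle_eq_of_ne hj s
  -- the image of F is a foundation set in the direct sum
  have hFhat : IsFoundationSet (ι '' F) := by
    constructor
    · exact hFfin.image ι
    · intro x
      obtain ⟨f, hfF, hfo⟩ := hFcov (x.1 i)
      rw [ar_not_orth_iff] at hfo
      obtain ⟨a, b, hab⟩ := hfo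
      refine ⟨ι f, Set.mem_image_of_mem ι hfF, ar_not_orth_iff.mpr
        (splice (ι f) x ⟨a, b, ?_⟩ ⟨x, 1, fun j hj => ?_⟩)⟩
      · rw [hι_same]; exact hab
      · rw [hι_ne f j hj, one_mul]
        show x.1 j = x.1 j * (1 : ∀ k, S k) j
        rw [Pi.one_apply, mul_one]
  obtain ⟨F', hF'found, hF'acc, hF'ref⟩ := hAR (ι '' F) hFhat
  obtain ⟨hF'fin, hF'cov⟩ := hF'found
  -- every arV set is nonempty
  have hVne : ∀ s : S i, (arV S i F' s).Nonempty := by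
    intro s
    obtain ⟨w, hw, hws⟩ := hF'cov (ι s)
    rw [ar_not_orth_iff] at hws
    obtain ⟨c, d, h⟩ := hws
    have h2 : w.1 i * c.1 i = (ι s).1 i * d.1 i := hcomp _ _ h i
    rw [hι_same] at h2
    exact ⟨w, hw, c.1 i, d.1 i, h2⟩
  -- the key contradiction lemma
  have key : ∀ (u u' : S i), arStable S i F' u → arStable S i F' u' →
      ∀ z : S i, z ∈ pIdeal (arG S i (arV S i F' u)) →
        z ∈ pIdeal (arG S i (arV S i F' u')) →
      ∀ w₀ : ↥(finSupp S), w₀ ∈ arV S i F' u' → w₀ ∉ arV S i F' u → False := by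
    intro u u' hu hu' z hz1 hz2 w₀ hw₀' hw₀
    obtain ⟨q₀, hq₀⟩ := exists_arStable S i F' hF'fin z
    have hsub : ∀ v ∈ arV S i F' u, v ∈ arV S i F' (z * q₀) := by
      intro v hv
      have hzv : z ∈ pIdeal (v.1 i) := by
        rw [← arG_spec S i (ar_lcm S i F' (hlcm i) hF'fin hu)] at hz1
        exact Set.mem_iInter₂.mp hz1 v hv
      obtain ⟨e, he⟩ := ar_mem_pIdeal.mp hzv
      exact ⟨hv.1, e * q₀, 1, by rw [mul_one, ← mul_assoc, he]⟩
    have hsub' : ∀ v ∈ arV S i F' u', v ∈ arV S i F' (z * q₀) := by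
      intro v hv
      have hzv : z ∈ pIdeal (v.1 i) := by
        rw [← arG_spec S i (ar_lcm S i F' (hlcm i) hF'fin hu')] at hz2
        exact Set.mem_iInter₂.mp hz2 v hv
      obtain ⟨e, he⟩ := ar_mem_pIdeal.mp hzv
      exact ⟨hv.1, e * q₀, 1, by rw [mul_one, ← mul_assoc, he]⟩
    -- tails of elements of arV (z*q₀) are pairwise orthogonal
    have tails_orth : ∀ v w : ↥(finSupp S), v ∈ arV S i F' (z * q₀) →
        w ∈ arV S i F' (z * q₀) → v ≠ w →
        ¬ ∃ c d : ↥(finSupp S), ∀ j, j ≠ i → v.1 j * c.1 j = w.1 j * d.1 j := by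
      rintro v w hv hw hvw ⟨c, d, ht⟩
      obtain ⟨hvF, cv, dv, hcv⟩ := hv
      have hw2 : w ∈ arV S i F' ((z * q₀) * dv) := by rw [hq₀ dv]; exact hw
      obtain ⟨hwF, cw, dw, hcw⟩ := hw2
      have hio : ∃ a b : S i, v.1 i * a = w.1 i * b :=
        ⟨cv * dw, cw, by rw [← mul_assoc, hcv]; exact hcw.symm⟩
      exact ar_not_orth_iff.mpr (splice v w hio ⟨c, d, ht⟩) (hF'acc v hvF w hwF hvw)
    -- tail covering: some element of arV u has tail non-orthogonal to tail of w₀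
    obtain ⟨wv, hwvV, hwvT⟩ : ∃ v, v ∈ arV S i F' u ∧
        ∃ c d : ↥(finSupp S), ∀ j, j ≠ i → v.1 j * c.1 j = w₀.1 j * d.1 j := by
      obtain ⟨w, hwF, hw⟩ := hF'cov ⟨Function.update w₀.1 i u, hupdate_mem w₀ u⟩
      obtain ⟨c, d, hcd2⟩ := ar_not_orth_iff.mp hw
      refine ⟨w, ⟨hwF, c.1 i, d.1 i, ?_⟩, c, d, fun j hjne => ?_⟩
      · have h2 : w.1 i * c.1 i = Function.update w₀.1 i u i * d.1 i := hcomp _ _ hcd2 i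
        rwa [Function.update_self] at h2
      · have h2 : w.1 j * c.1 j = Function.update w₀.1 i u j * d.1 j := hcomp _ _ hcd2 j
        rwa [Function.update_of_ne hjne] at h2
    exact tails_orth wv w₀ (hsub wv hwvV) (hsub' w₀ hw₀')
      (fun h => hw₀ (h ▸ hwvV)) hwvT
  -- the accurate refinement
  refine ⟨arG S i '' {A | ∃ u : S i, arStable S i F' u ∧ arV S i F' u = A},
    ⟨?_, ?_⟩, ?_, ?_⟩
  · -- finiteness
    apply Set.Finite.image
    apply hF'fin.finite_subsets.subset
    rintro A ⟨u, -, rfl⟩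
    exact fun w hw => hw.1
  · -- foundation
    intro t
    obtain ⟨q, hq⟩ := exists_arStable S i F' hF'fin t
    refine ⟨arG S i (arV S i F' (t * q)),
      Set.mem_image_of_mem _ ⟨t * q, hq, rfl⟩, ?_⟩
    rw [ar_not_orth_iff]
    obtain ⟨r, hr⟩ := ar_chain S i F' hq (arV S i F' (t * q))
      (hF'fin.subset fun w hw => hw.1) Set.Subset.rfl
    have hmem : (t * q) * r ∈ pIdeal (arG S i (arV S i F' (t * q))) := by
      rw [← arG_spec S i (ar_lcm S i F' (hlcm i) hF'fin hq)]
      exact Set.mem_iInter₂.mpr fun w hw =>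
        ar_mem_pIdeal.mpr ((hr w hw).imp fun c hc => hc.symm)
    obtain ⟨e, he⟩ := ar_mem_pIdeal.mp hmem
    exact ⟨e, q * r, by rw [he, mul_assoc]⟩
  · -- accuracy
    rintro g1 ⟨A1, ⟨u1, hu1, rfl⟩, rfl⟩ g2 ⟨A2, ⟨u2, hu2, rfl⟩, rfl⟩ hne
    by_contra hnorth
    obtain ⟨c, d, hcd⟩ := ar_not_orth_iff.mp hnorth
    have hz1 : arG S i (arV S i F' u1) * c ∈ pIdeal (arG S i (arV S i F' u1)) :=
      ar_mem_pIdeal.mpr ⟨c, rfl⟩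
    have hz2 : arG S i (arV S i F' u1) * c ∈ pIdeal (arG S i (arV S i F' u2)) :=
      ar_mem_pIdeal.mpr ⟨d, hcd.symm⟩
    have hAne : arV S i F' u1 ≠ arV S i F' u2 := fun h => hne (by rw [h])
    by_cases hsubc : ∀ w ∈ arV S i F' u2, w ∈ arV S i F' u1
    · have hex : ∃ w₀, w₀ ∈ arV S i F' u1 ∧ w₀ ∉ arV S i F' u2 := by
        by_contra hc2
        push_neg at hc2
        exact hAne (Set.Subset.antisymm hc2 hsubc)
      obtain ⟨w₀, hw1, hw2⟩ := hex
      exact key u2 u1 hu2 hu1 _ hz2 hz1 w₀ hw1 hw2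
    · push_neg at hsubc
      obtain ⟨w₀, hw2, hw1⟩ := hsubc
      exact key u1 u2 hu1 hu2 _ hz1 hz2 w₀ hw2 hw1
  · -- refinement
    rintro g ⟨A, ⟨u, hu, rfl⟩, rfl⟩
    obtain ⟨w, hwV⟩ := hVne u
    have hg : arG S i (arV S i F' u) ∈ pIdeal (w.1 i) := by
      have hmem : arG S i (arV S i F' u) ∈ ⋂ w ∈ arV S i F' u, pIdeal (w.1 i) := by
        rw [arG_spec S i (ar_lcm S i F' (hlcm i) hF'fin hu)]
        exact ar_mem_pIdeal.mpr ⟨1, mul_one _⟩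
      exact Set.mem_iInter₂.mp hmem w hwV
    obtain ⟨e, he⟩ := ar_mem_pIdeal.mp hg
    obtain ⟨x, ⟨f, hfF, rfl⟩, r, hwr⟩ := hF'ref hwV.1
    refine ⟨f, hfF, r.1 i * e, ?_⟩
    have h1 : w.1 i = f * r.1 i := by
      have h2 : w.1 i = (ι f * r).1 i := hcomp _ _ hwr i
      rw [h2]
      show (ι f).1 i * r.1 i = f * r.1 i
      rw [hι_same]
    rw [← he, h1, mul_assoc]
end

section
/- The free monoid F⁺ₘ on 2 ≤ m < ∞ generators admits a unique generalised scale N: F⁺ₘ → ℕ×, and it is given by N(w) = m^{ℓ(w)} where ℓ(w) is the word length of w. -/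
/-- A minimal complete set (transversal) of representatives for `N⁻¹(n)/∼`. -/
def IsTransversal {S : Type*} [Monoid S] (N : S →* ℕ) (n : ℕ) (T : Set S) : Prop :=
  (∀ t ∈ T, N t = n) ∧ (∀ s : S, N s = n → ∃ t ∈ T, coreRel s t) ∧
  (∀ t ∈ T, ∀ t' ∈ T, coreRel t t' → t = t')

/-- A generalised scale: a nontrivial homomorphism into `(ℕ₊, ·)` such that `N⁻¹(n)/∼`
has exactly `n` elements and every minimal complete set of representatives of
`N⁻¹(n)/∼` is an accurate foundation set, for every `n` in the image of `N`. -/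
def IsGenScale {S : Type*} [Monoid S] (N : S →* ℕ) : Prop :=
  (∀ s : S, N s ≠ 0) ∧ (∃ s : S, N s ≠ 1) ∧
  ∀ n ∈ Set.range N,
    (∃ T : Set S, IsTransversal N n T ∧ T.Finite ∧ T.ncard = n) ∧
    (∀ T : Set S, IsTransversal N n T → Accurate T ∧ IsFoundationSet T)

/-- The homomorphism `w ↦ m ^ length w` on the free monoid on `m` generators. -/
def lengthScale (m : ℕ) : FreeMonoid (Fin m) →* ℕ where
  toFun w := m ^ w.length
  map_one' := by simp
  map_mul' a b := by simp [FreeMonoid.length_mul, pow_add]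



namespace GenScaleAux

open FreeMonoid

variable {α : Type*}

theorem mem_pIdeal_iff {s x : FreeMonoid α} :
    x ∈ pIdeal s ↔ toList s <+: toList x := by
  constructor
  · rintro ⟨r, rfl⟩; exact ⟨toList r, rfl⟩
  · rintro ⟨t, ht⟩; exact ⟨ofList t, congrArg ofList ht⟩

theorem not_orth_iff {s t : FreeMonoid α} :
    ¬ Orth s t ↔ (toList s <+: toList t ∨ toList t <+: toList s) := by
  constructor
  · intro h
    rw [Orth, Set.eq_empty_iff_forall_notMem] at h
    push_neg at h
    obtain ⟨x, hxs, hxt⟩ := h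
    exact List.prefix_or_prefix_of_prefix (mem_pIdeal_iff.1 hxs) (mem_pIdeal_iff.1 hxt)
  · rintro (⟨u, hu⟩ | ⟨u, hu⟩) h
    · rw [Orth, Set.eq_empty_iff_forall_notMem] at h
      exact h t ⟨mem_pIdeal_iff.2 ⟨u, hu⟩, mem_pIdeal_iff.2 (List.prefix_refl _)⟩
    · rw [Orth, Set.eq_empty_iff_forall_notMem] at h
      exact h s ⟨mem_pIdeal_iff.2 (List.prefix_refl _), mem_pIdeal_iff.2 ⟨u, hu⟩⟩

theorem orth_iff {s t : FreeMonoid α} :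
    Orth s t ↔ ¬ (toList s <+: toList t ∨ toList t <+: toList s) := by
  rw [← not_orth_iff, not_not]

theorem one_mem_core : (1 : FreeMonoid α) ∈ core (FreeMonoid α) := by
  intro s
  rw [not_orth_iff]
  exact Or.inl (List.nil_prefix)

theorem core_eq {m : ℕ} (hm : 2 ≤ m) :
    core (FreeMonoid (Fin m)) = {1} := by
  ext a
  simp only [Set.mem_singleton_iff]
  constructor
  · intro ha
    by_contra h1
    -- a is a nonempty list
    obtain ⟨c, l, hcl⟩ : ∃ c l, toList a = c :: l := by
      cases h : toList a with
      | nil => exact absurd (congrArg ofList h) h1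
      | cons c l => exact ⟨c, l, rfl⟩
    -- pick a letter different from c
    obtain ⟨y, hy⟩ : ∃ y : Fin m, y ≠ c := by
      rcases eq_or_ne c ⟨0, by omega⟩ with h | h
      · exact ⟨⟨1, by omega⟩, by simp [h, Fin.ext_iff]⟩
      · exact ⟨⟨0, by omega⟩, fun hh => h (hh ▸ rfl)⟩
    refine ha (of y) (orth_iff.2 ?_)
    rintro (⟨u, hu⟩ | ⟨u, hu⟩)
    · have h2 : toList a ++ u = [y] := hu
      rw [hcl, List.cons_append] at h2
      injection h2 with h _
      exact hy h.symm
    · have h2 : ([y] : List (Fin m)) ++ u = toList a := hu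
      rw [hcl, List.singleton_append] at h2
      injection h2 with h _
      exact hy h
  · rintro rfl; exact one_mem_core

theorem coreRel_iff {m : ℕ} (hm : 2 ≤ m) {s t : FreeMonoid (Fin m)} :
    coreRel s t ↔ s = t := by
  constructor
  · rintro ⟨a, ha, b, hb, hab⟩
    rw [core_eq hm, Set.mem_singleton_iff] at ha hb
    subst ha; subst hb
    simpa using hab
  · rintro rfl
    exact ⟨1, one_mem_core, 1, one_mem_core, rfl⟩

theorem transversal_eq {m : ℕ} (hm : 2 ≤ m) {N : FreeMonoid (Fin m) →* ℕ} {n : ℕ}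
    {T : Set (FreeMonoid (Fin m))} (h : IsTransversal N n T) :
    T = {s | N s = n} := by
  obtain ⟨h1, h2, _⟩ := h
  ext s
  constructor
  · exact fun hs => h1 s hs
  · intro hs
    obtain ⟨t, ht, hst⟩ := h2 s hs
    rwa [(coreRel_iff hm).1 hst]

theorem isTransversal_fiber {m : ℕ} (hm : 2 ≤ m) (N : FreeMonoid (Fin m) →* ℕ) (n : ℕ) :
    IsTransversal N n {s | N s = n} := by
  refine ⟨fun t ht => ht, fun s hs => ⟨s, hs, (coreRel_iff hm).2 rfl⟩,
    fun t _ t' _ h => (coreRel_iff hm).1 h⟩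

/-- The set of words of length `k`. -/
def lenSet (m k : ℕ) : Set (FreeMonoid (Fin m)) := {w | w.length = k}

theorem lenSet_eq_range (m k : ℕ) :
    lenSet m k = Set.range (fun f : Fin k → Fin m => ofList (List.ofFn f)) := by
  ext w
  constructor
  · intro hw
    refine ⟨fun i => (toList w).get (Fin.cast hw.symm i), ?_⟩
    have hofn : List.ofFn (fun i => (toList w).get (Fin.cast hw.symm i)) = toList w := by
      apply List.ext_get
      · simp only [List.length_ofFn]; exact hw.symm
      · intro i h1 h2
        simp; rfl
    exact congrArg ofList hofn
  · rintro ⟨f, rfl⟩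
    show (List.ofFn f).length = k
    simp


theorem lenSet_finite (m k : ℕ) : (lenSet m k).Finite := by
  rw [lenSet_eq_range]; exact Set.finite_range _

theorem lenSet_ncard (m k : ℕ) : (lenSet m k).ncard = m ^ k := by
  have hinj : Function.Injective (fun f : Fin k → Fin m => ofList (List.ofFn f)) :=
    fun f g h => List.ofFn_injective (congrArg toList h)
  rw [lenSet_eq_range, ← Set.image_univ, Set.ncard_image_of_injective Set.univ hinj,
    Set.ncard_univ]
  simp [Nat.card_eq_fintype_card]

theorem lenSet_accurate (m k : ℕ) : Accurate (lenSet m k) := by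
  intro f hf g hg hfg
  rw [orth_iff]
  rintro (h | h)
  · exact hfg ((FreeMonoid.toList).injective (h.eq_of_length (hf.trans hg.symm)))
  · exact hfg ((FreeMonoid.toList).injective (h.eq_of_length (hg.trans hf.symm)).symm)

theorem lenSet_foundation {m : ℕ} (hm : 2 ≤ m) (k : ℕ) : IsFoundationSet (lenSet m k) := by
  refine ⟨lenSet_finite m k, fun s => ?_⟩
  rcases le_or_gt k s.length with h | h
  · refine ⟨ofList ((toList s).take k), ?_, ?_⟩
    · show ((toList s).take k).length = k
      have h' : k ≤ (toList s).length := h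
      simp [List.length_take]
      omega
    · rw [not_orth_iff]
      exact Or.inl (List.take_prefix k (toList s))
  · refine ⟨s * ofList (List.replicate (k - s.length) ⟨0, by omega⟩), ?_, ?_⟩
    · have h2 : (ofList (List.replicate (k - s.length) (⟨0, by omega⟩ : Fin m))).length
          = k - s.length := List.length_replicate
      show FreeMonoid.length _ = k
      rw [FreeMonoid.length_mul, h2]
      omega
    · rw [not_orth_iff]
      exact Or.inr (List.prefix_append _ _)

theorem fiber_lengthScale {m : ℕ} (hm : 2 ≤ m) (k : ℕ) :
    {s : FreeMonoid (Fin m) | lengthScale m s = m ^ k} = lenSet m k := by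
  ext w
  simp only [Set.mem_setOf_eq, lenSet]
  constructor
  · intro h
    exact Nat.pow_right_injective hm h
  · intro h
    show m ^ w.length = m ^ k
    rw [h]

theorem lengthScale_isGenScale {m : ℕ} (hm : 2 ≤ m) : IsGenScale (lengthScale m) := by
  refine ⟨fun s => pow_ne_zero _ (by omega), ⟨of ⟨0, by omega⟩, ?_⟩, ?_⟩
  · show m ^ FreeMonoid.length (of (⟨0, by omega⟩ : Fin m)) ≠ 1
    rw [FreeMonoid.length_of, pow_one]; omega
  · rintro n ⟨w, rfl⟩
    have hfib : {s : FreeMonoid (Fin m) | lengthScale m s = lengthScale m w}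
        = lenSet m w.length := fiber_lengthScale hm w.length
    constructor
    · refine ⟨lenSet m w.length, ?_, lenSet_finite m w.length, lenSet_ncard m w.length⟩
      rw [← hfib]
      exact isTransversal_fiber hm (lengthScale m) (lengthScale m w)
    · intro T hT
      have : T = lenSet m w.length := (transversal_eq hm hT).trans hfib
      rw [this]
      exact ⟨lenSet_accurate m w.length, lenSet_foundation hm w.length⟩

theorem gen_scale_unique {m : ℕ} (hm : 2 ≤ m) (N : FreeMonoid (Fin m) →* ℕ)
    (hN : IsGenScale N) : N = lengthScale m := by
  obtain ⟨hNz, -, hmain⟩ := hN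
  -- Step 1: N w = 1 → w = 1
  have hone : ∀ w : FreeMonoid (Fin m), N w = 1 → w = 1 := by
    intro w hw
    obtain ⟨⟨T, hT, hTfin, hTcard⟩, -⟩ := hmain 1 ⟨1, map_one N⟩
    have hTeq : T = {s | N s = 1} := transversal_eq hm hT
    obtain ⟨t, ht⟩ := Set.ncard_eq_one.1 hTcard
    have h1 : (1 : FreeMonoid (Fin m)) ∈ T := by rw [hTeq]; exact map_one N
    have hwT : w ∈ T := by rw [hTeq]; exact hw
    rw [ht, Set.mem_singleton_iff] at h1 hwT
    exact hwT.trans h1.symm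
  -- Step 2: letters have value ≥ 2
  have hof_ne_one : ∀ y : Fin m, of y ≠ (1 : FreeMonoid (Fin m)) := by
    intro y h
    have : ([y] : List (Fin m)) = [] := congrArg toList h
    simp at this
  have hletter2 : ∀ y : Fin m, 2 ≤ N (of y) := by
    intro y
    have h0 := hNz (of y)
    have h1 : N (of y) ≠ 1 := fun h => hof_ne_one y (hone _ h)
    omega
  -- Step 3: a letter with minimal value
  obtain ⟨x, -, hxmin⟩ := Finset.exists_min_image (Finset.univ : Finset (Fin m))
      (fun y => N (of y)) ⟨⟨0, by omega⟩, Finset.mem_univ _⟩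
  set n := N (of x) with hn
  have hn2 : 2 ≤ n := hletter2 x
  have hnrange : n ∈ Set.range N := ⟨of x, rfl⟩
  have hfound : IsFoundationSet {s : FreeMonoid (Fin m) | N s = n} :=
    ((hmain n hnrange).2 _ (isTransversal_fiber hm N n)).2
  -- Step 4: all letters have value n
  have hall : ∀ y : Fin m, N (of y) = n := by
    intro y
    obtain ⟨f, hf, hforth⟩ := hfound.2 (of y)
    rw [not_orth_iff] at hforth
    rcases hforth with ⟨u, hu⟩ | ⟨u, hu⟩
    · -- toList f ++ u = [y]
      have hu' : toList f ++ u = [y] := hu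
      cases hl : toList f with
      | nil =>
        have hf1 : f = (1 : FreeMonoid (Fin m)) := (FreeMonoid.toList).injective hl
        have h1n : (1 : ℕ) = n := by rw [← map_one N, ← hf1]; exact hf
        omega
      | cons c l' =>
        rw [hl, List.cons_append] at hu'
        injection hu' with h1 h2
        have hl' : l' = [] := (List.append_eq_nil_iff.1 h2).1
        have : f = of y := by
          apply (FreeMonoid.toList).injective
          rw [hl, hl', h1]
          rfl
        rw [← this, hf]
    · -- [y] ++ u = toList f
      have hfeq : f = of y * ofList u := by
        apply (FreeMonoid.toList).injective
        exact hu.symm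
      have hprod : N (of y) * N (ofList u) = n := by
        rw [← map_mul, ← hfeq]; exact hf
      have h1 : n ≤ N (of y) := hxmin y (Finset.mem_univ y)
      have h3 : 1 ≤ N (ofList u) := Nat.one_le_iff_ne_zero.2 (hNz _)
      have h4 : N (of y) ≤ N (of y) * N (ofList u) := Nat.le_mul_of_pos_right _ h3
      omega
  -- Step 5: N w = n ^ length w
  have hpow : ∀ w : FreeMonoid (Fin m), N w = n ^ w.length := by
    intro w
    induction w using FreeMonoid.inductionOn' with
    | one => simp
    | of_mul b a ih =>
      rw [map_mul, hall b, ih, FreeMonoid.length_mul, FreeMonoid.length_of, pow_add, pow_one]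
  -- Step 6: the fiber of n is the set of letters
  have hfib : {s : FreeMonoid (Fin m) | N s = n}
      = Set.range (of : Fin m → FreeMonoid (Fin m)) := by
    ext w
    simp only [Set.mem_setOf_eq]
    constructor
    · intro hw
      rw [hpow] at hw
      have hw1 : n ^ w.length = n ^ 1 := by rw [hw, pow_one]
      have hlen : (toList w).length = 1 := Nat.pow_right_injective hn2 hw1
      obtain ⟨c, hc⟩ := List.length_eq_one_iff.1 hlen
      exact ⟨c, (FreeMonoid.toList).injective hc.symm⟩
    · rintro ⟨y, rfl⟩; exact hall y
  -- Step 7: counting gives n = m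
  obtain ⟨⟨T, hT, hTfin, hTcard⟩, -⟩ := hmain n hnrange
  have hTeq : T = Set.range (of : Fin m → FreeMonoid (Fin m)) :=
    (transversal_eq hm hT).trans hfib
  rw [hTeq] at hTcard
  have hcard : (Set.range (of : Fin m → FreeMonoid (Fin m))).ncard = m := by
    rw [← Set.image_univ, Set.ncard_image_of_injective _ FreeMonoid.of_injective,
      Set.ncard_univ]
    simp
  have hnm : n = m := by rw [← hTcard, hcard]
  ext w
  show N (of w) = m ^ FreeMonoid.length (of w)
  rw [hpow, hnm]

end GenScaleAux

/-- Proposition 4.5: the free monoid on `2 ≤ m < ∞` generators admits a unique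
generalised scale, given by `w ↦ m ^ length w`. -/
theorem unique_gen_scale_free_monoid (m : ℕ) (hm : 2 ≤ m) :
    IsGenScale (lengthScale m) ∧
    ∀ N : FreeMonoid (Fin m) →* ℕ, IsGenScale N → N = lengthScale m :=
  ⟨GenScaleAux.lengthScale_isGenScale hm, fun N hN => GenScaleAux.gen_scale_unique hm N hN⟩
end

section
/- Let M be a free abelian monoid and, for each i in a nonempty index set I, let mᵢ satisfy 2 ≤ mᵢ < ∞. The monoid S = M ⊕ ⊕_{i∈I} F⁺_{mᵢ} admits a generalised scale if and only if the family (mᵢ) is rationally independent, i.e., for distinct finitely supported k, k' ∈ ⊕_{i∈I} ℕ the supernatural numbers ∏ᵢ mᵢ^{kᵢ} and ∏ᵢ mᵢ^{k'ᵢ} are distinct. In that case the generalised scale is unique and restricts to the unique generalised scale on each F⁺_{mᵢ}. -/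
/-- The canonical inclusion of a single coordinate into the direct sum. -/
def dsOf {I : Type*} (S : I → Type*) [∀ i, Monoid (S i)] [DecidableEq I] (i : I) (w : S i) :
    ↥(finSupp S) :=
  ⟨Pi.mulSingle i w, (Set.finite_singleton i).subset (fun j hj => by
    simp only [Set.mem_singleton_iff]
    by_contra h
    exact hj (Pi.mulSingle_eq_of_ne h w))⟩

namespace GSAux
set_option linter.unusedSectionVars false

open FreeMonoid

variable {J I : Type*} [DecidableEq I] {m : I → ℕ}

abbrev W (m : I → ℕ) := ↥(finSupp (fun i => FreeMonoid (Fin (m i))))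
abbrev SM (J : Type*) (m : I → ℕ) [DecidableEq I] :=
  Multiplicative (J →₀ ℕ) × W m

/-- coordinate of an element of `W m`. -/
def co (w : W m) (i : I) : List (Fin (m i)) := toList (w.1 i)

@[simp] lemma co_mul (w u : W m) (i : I) : co (w * u) i = co w i ++ co u i := rfl

@[simp] lemma co_one (i : I) : co (1 : W m) i = [] := rfl

lemma W_ext {w u : W m} (h : ∀ i, co w i = co u i) : w = u := by
  apply Subtype.ext; funext i; exact h i

lemma co_finite (w : W m) : {i | co w i ≠ []}.Finite := w.2

lemma mem_pIdeal_iff {w u : W m} : u ∈ pIdeal w ↔ ∀ i, co w i <+: co u i := by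
  constructor
  · rintro ⟨v, rfl⟩ i
    show co w i <+: co (w * v) i
    rw [co_mul]; exact List.prefix_append _ _

  · intro h
    refine ⟨⟨fun i => ofList ((co u i).drop (co w i).length), ?_⟩, ?_⟩
    · refine (co_finite u).subset (fun i hi => ?_)
      simp only [Set.mem_setOf_eq] at hi ⊢
      intro hu
      apply hi
      show ofList (List.drop (co w i).length (co u i)) = 1
      rw [hu, List.drop_nil]; rfl
    · apply Subtype.ext; funext i
      show w.1 i * ofList ((co u i).drop (co w i).length) = u.1 i
      obtain ⟨t, ht⟩ := h i
      apply FreeMonoid.toList.injective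
      rw [FreeMonoid.toList_mul]
      show co w i ++ List.drop (co w i).length (co u i) = co u i
      rw [← ht, List.drop_left]

end GSAux

namespace GSAux
set_option linter.unusedSectionVars false
open FreeMonoid
variable {J I : Type*} [DecidableEq I] {m : I → ℕ}

/-- comparability of words -/
def Cmp {α : Type*} (a b : List α) : Prop := a <+: b ∨ b <+: a

lemma cmp_nil_left {α : Type*} (b : List α) : Cmp [] b := Or.inl (List.nil_prefix)

lemma mem_pIdeal_prod_iff {s z : SM J m} :
    z ∈ pIdeal s ↔ z.1 ∈ pIdeal s.1 ∧ z.2 ∈ pIdeal s.2 := by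
  constructor
  · rintro ⟨r, rfl⟩
    exact ⟨⟨r.1, rfl⟩, ⟨r.2, rfl⟩⟩
  · rintro ⟨⟨r1, h1⟩, ⟨r2, h2⟩⟩
    exact ⟨(r1, r2), Prod.ext h1 h2⟩

lemma mem_pIdeal_M (x y : Multiplicative (J →₀ ℕ)) : x * y ∈ pIdeal y :=
  ⟨x, mul_comm y x⟩

lemma not_orth_of_cmp {s t : SM J m} (h : ∀ i, Cmp (co s.2 i) (co t.2 i)) :
    ¬ Orth s t := by
  intro horth
  have hv : {i | (if _h : co s.2 i <+: co t.2 i then t.2.1 i else s.2.1 i) ≠ 1}.Finite := by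
    refine ((co_finite s.2).union (co_finite t.2)).subset (fun i hi => ?_)
    simp only [Set.mem_setOf_eq] at hi
    by_contra hc
    simp only [Set.mem_union, Set.mem_setOf_eq, not_or, not_not] at hc
    apply hi
    split
    · exact hc.2
    · exact hc.1
  set v : W m := ⟨fun i => if _h : co s.2 i <+: co t.2 i then t.2.1 i else s.2.1 i, hv⟩ with hvdef
  have hco : ∀ i, co s.2 i <+: co v i ∧ co t.2 i <+: co v i := by
    intro i
    show co s.2 i <+: (if _h : co s.2 i <+: co t.2 i then co t.2 i else co s.2 i) ∧
      co t.2 i <+: (if _h : co s.2 i <+: co t.2 i then co t.2 i else co s.2 i)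
    split
    · next hp => exact ⟨hp, List.prefix_refl _⟩
    · next hp => exact ⟨List.prefix_refl _, (h i).resolve_left hp⟩
  have hz : ((s.1 * t.1, v) : SM J m) ∈ pIdeal s ∩ pIdeal t := by
    constructor
    · exact mem_pIdeal_prod_iff.2 ⟨⟨t.1, rfl⟩, mem_pIdeal_iff.2 (fun i => (hco i).1)⟩
    · exact mem_pIdeal_prod_iff.2 ⟨⟨s.1, mul_comm t.1 s.1⟩, mem_pIdeal_iff.2 (fun i => (hco i).2)⟩
  exact Set.eq_empty_iff_forall_notMem.mp horth _ hz

lemma orth_of_incmp {s t : SM J m} (i : I) (h : ¬ Cmp (co s.2 i) (co t.2 i)) :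
    Orth s t := by
  rw [Orth, Set.eq_empty_iff_forall_notMem]
  rintro z ⟨hzs, hzt⟩
  have h1 := (mem_pIdeal_iff.1 (mem_pIdeal_prod_iff.1 hzs).2) i
  have h2 := (mem_pIdeal_iff.1 (mem_pIdeal_prod_iff.1 hzt).2) i
  exact h (List.prefix_or_prefix_of_prefix h1 h2)

/-- letter with index `0` -/
def let0 (hm : ∀ i, 2 ≤ m i) (i : I) : Fin (m i) := ⟨0, by have := hm i; omega⟩

/-- a letter different from `c` -/
def letNe (hm : ∀ i, 2 ≤ m i) {i : I} (c : Fin (m i)) : Fin (m i) :=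
  if c.val = 0 then ⟨1, by have := hm i; omega⟩ else ⟨0, by have := hm i; omega⟩

lemma letNe_ne (hm : ∀ i, 2 ≤ m i) {i : I} (c : Fin (m i)) : letNe hm c ≠ c := by
  intro hc
  unfold letNe at hc
  rw [Fin.ext_iff] at hc
  split at hc <;> simp_all

lemma co_dsOf_self (i : I) (w : FreeMonoid (Fin (m i))) :
    co (dsOf (fun i => FreeMonoid (Fin (m i))) i w) i = toList w := by
  show toList ((Pi.mulSingle (M := fun i => FreeMonoid (Fin (m i))) i w) i) = toList w
  rw [Pi.mulSingle_eq_same]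

lemma co_dsOf_ne {i j : I} (hij : j ≠ i) (w : FreeMonoid (Fin (m i))) :
    co (dsOf (fun i => FreeMonoid (Fin (m i))) i w) j = [] := by
  show toList ((Pi.mulSingle (M := fun i => FreeMonoid (Fin (m i))) i w) j) = ([] : List (Fin (m j)))
  rw [Pi.mulSingle_eq_of_ne hij]
  rfl

lemma core_eq (hm : ∀ i, 2 ≤ m i) :
    core (SM J m) = {s | s.2 = 1} := by
  ext s
  constructor
  · intro hs
    by_contra hne
    have : ∃ i, co s.2 i ≠ [] := by
      by_contra hall
      push_neg at hall
      exact hne (W_ext (fun i => by rw [hall i, co_one]))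
    obtain ⟨i, hi⟩ := this
    obtain ⟨c, r, hcr⟩ := List.exists_cons_of_ne_nil hi
    set t : SM J m := (1, dsOf (fun i => FreeMonoid (Fin (m i))) i (of (letNe hm c)))
    refine hs t (orth_of_incmp i ?_)
    rw [hcr, co_dsOf_self]
    rintro (⟨l, hl⟩ | ⟨l, hl⟩)
    · rw [toList_of, List.cons_append, List.cons_eq_cons] at hl
      exact letNe_ne hm c hl.1.symm
    · rw [toList_of, List.singleton_append, List.cons_eq_cons] at hl
      exact letNe_ne hm c hl.1
  · intro hs t
    refine not_orth_of_cmp (fun i => ?_)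
    have : co s.2 i = [] := by rw [hs, co_one]
    rw [this]
    exact cmp_nil_left _

lemma coreRel_iff (hm : ∀ i, 2 ≤ m i) {s t : SM J m} :
    coreRel s t ↔ s.2 = t.2 := by
  constructor
  · rintro ⟨a, ha, b, hb, h⟩
    rw [core_eq hm] at ha hb
    have h2 : s.2 * a.2 = t.2 * b.2 := congrArg Prod.snd h
    rwa [ha, hb, mul_one, mul_one] at h2
  · intro h
    refine ⟨(t.1, 1), ?_, (s.1, 1), ?_, ?_⟩
    · rw [core_eq hm]; rfl
    · rw [core_eq hm]; rfl
    · exact Prod.ext (mul_comm s.1 t.1) (by simp [h])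

/-- `dsOf` as a monoid hom. -/
def dsOfHom (i : I) : FreeMonoid (Fin (m i)) →* W m where
  toFun := dsOf (fun i => FreeMonoid (Fin (m i))) i
  map_one' := by
    apply Subtype.ext
    show Pi.mulSingle (M := fun i => FreeMonoid (Fin (m i))) i 1 = 1
    exact Pi.mulSingle_one i
  map_mul' := fun x y => by
    apply Subtype.ext
    show Pi.mulSingle (M := fun i => FreeMonoid (Fin (m i))) i (x * y) =
      Pi.mulSingle (M := fun i => FreeMonoid (Fin (m i))) i x *
      Pi.mulSingle (M := fun i => FreeMonoid (Fin (m i))) i y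
    exact Pi.mulSingle_mul (f := fun i => FreeMonoid (Fin (m i))) i x y

lemma co_ne_nil_iff {w : W m} {i : I} : co w i ≠ [] ↔ w.1 i ≠ 1 := Iff.rfl

lemma dsOfHom_apply (i : I) (w : FreeMonoid (Fin (m i))) :
    dsOfHom i w = dsOf (fun i => FreeMonoid (Fin (m i))) i w := rfl

/-- update a `W` element at one coordinate -/
def Wupdate (w : W m) (i : I) (l : FreeMonoid (Fin (m i))) : W m :=
  ⟨Function.update w.1 i l, by
    refine ((co_finite w).union (Set.finite_singleton i)).subset (fun j hj => ?_)
    simp only [Set.mem_setOf_eq] at hj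
    rcases eq_or_ne j i with rfl | hne
    · exact Or.inr rfl
    · left
      rw [Function.update_of_ne hne] at hj
      exact hj ⟩

lemma decomp_head (w : W m) (i : I) (c : Fin (m i)) (r : List (Fin (m i)))
    (h : co w i = c :: r) :
    w = dsOfHom i (of c) * Wupdate w i (ofList r) := by
  apply W_ext
  intro j
  rw [co_mul, dsOfHom_apply]
  rcases eq_or_ne j i with rfl | hne
  · rw [co_dsOf_self, toList_of, h]
    show (c :: r : List _) = [c] ++ toList (Function.update w.1 j (ofList r) j)
    rw [Function.update_self]
    rfl
  · rw [co_dsOf_ne hne]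
    show co w j = [] ++ toList (Function.update w.1 i (ofList r) j)
    rw [Function.update_of_ne hne]
    rfl

lemma decomp_update (w : W m) (i : I) :
    w = dsOfHom i (w.1 i) * Wupdate w i 1 := by
  apply W_ext
  intro j
  rw [co_mul, dsOfHom_apply]
  rcases eq_or_ne j i with rfl | hne
  · rw [co_dsOf_self]
    show toList (w.1 j) = toList (w.1 j) ++ toList (Function.update w.1 j 1 j)
    rw [Function.update_self, toList_one, List.append_nil]
  · rw [co_dsOf_ne hne]
    show co w j = [] ++ toList (Function.update w.1 i 1 j)
    rw [Function.update_of_ne hne]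
    rfl

lemma Wupdate_one_eq_one_of (w : W m) (i : I) {j : I} (hj : j ≠ i) (h : w.1 j = 1) :
    (Wupdate w i 1).1 j = 1 := by
  show Function.update w.1 i 1 j = 1
  rw [Function.update_of_ne hj, h]

lemma hom_ext_W {P : Type*} [Monoid P] {f g : W m →* P}
    (h : ∀ (i : I) (a : Fin (m i)), f (dsOfHom i (of a)) = g (dsOfHom i (of a))) :
    f = g := by
  have key : ∀ (s : Finset I) (w : W m), (∀ j ∉ s, w.1 j = 1) → f w = g w := by
    intro s
    induction s using Finset.induction_on with
    | empty =>
      intro w hw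
      have : w = 1 := W_ext (fun i => by
        have := hw i (Finset.notMem_empty i)
        show toList (w.1 i) = []
        rw [this, toList_one])
      rw [this, map_one, map_one]
    | insert a s ha ih =>
      intro w hw
      rw [decomp_update w a, map_mul, map_mul]
      have h1 : f (dsOfHom a (w.1 a)) = g (dsOfHom a (w.1 a)) := by
        have : f.comp (dsOfHom a) = g.comp (dsOfHom a) := FreeMonoid.hom_eq (fun x => h a x)
        exact DFunLike.congr_fun this (w.1 a)
      have h2 : f (Wupdate w a 1) = g (Wupdate w a 1) := by
        refine ih _ (fun j hj => ?_)
        rcases eq_or_ne j a with rfl | hne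
        · show Function.update w.1 j 1 j = 1
          rw [Function.update_self]
        · exact Wupdate_one_eq_one_of w a hne
            (hw j (by simp only [Finset.mem_insert, not_or]; exact ⟨hne, hj⟩))
      rw [h1, h2]
  ext w
  exact key w.2.toFinset w (fun j hj => by
    by_contra hne
    exact hj (Set.Finite.mem_toFinset _ |>.2 hne))

/-- embedding `W m →* SM J m` -/
noncomputable def inrW (J : Type*) (m : I → ℕ) : W m →* SM J m := MonoidHom.inr _ _

lemma SM_decomp (s : SM J m) : s = (s.1, 1) * (1, s.2) := by
  apply Prod.ext <;> simp

lemma hom_ext_SM {f g : SM J m →* ℕ}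
    (h1 : ∀ x : Multiplicative (J →₀ ℕ), f (x, 1) = g (x, 1))
    (h2 : ∀ (i : I) (a : Fin (m i)), f (1, dsOfHom i (of a)) = g (1, dsOfHom i (of a))) :
    f = g := by
  ext s
  rw [SM_decomp s, map_mul, map_mul, h1 s.1]
  have : f.comp (inrW J m) = g.comp (inrW J m) := hom_ext_W (fun i a => h2 i a)
  have h3 : f (1, s.2) = g (1, s.2) := DFunLike.congr_fun this s.2
  rw [h3]

/-- length profile of an element of `W m` -/
noncomputable def profile (w : W m) : I →₀ ℕ :=
  Finsupp.ofSupportFinite (fun i => (co w i).length) <| by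
    refine (co_finite w).subset (fun i hi => ?_)
    simp only [Function.mem_support] at hi
    simp only [Set.mem_setOf_eq]
    intro hnil
    rw [hnil] at hi
    exact hi rfl

lemma profile_apply (w : W m) (i : I) : profile w i = (co w i).length := rfl

lemma profile_mul (w u : W m) : profile (w * u) = profile w + profile u := by
  ext i
  simp only [profile_apply, co_mul, List.length_append, Finsupp.add_apply]

lemma profile_one : profile (1 : W m) = 0 := by
  ext i
  simp [profile_apply]

lemma profile_dsOfHom (i : I) (l : FreeMonoid (Fin (m i))) :
    profile (dsOfHom i l) = Finsupp.single i l.length := by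
  ext j
  rcases eq_or_ne j i with rfl | hne
  · rw [profile_apply, dsOfHom_apply, co_dsOf_self, Finsupp.single_eq_same]
    rfl
  · rw [profile_apply, dsOfHom_apply, co_dsOf_ne hne, Finsupp.single_eq_of_ne' (Ne.symm hne)]
    rfl

/-- the candidate generalised scale -/
noncomputable def N0 (J : Type*) (m : I → ℕ) [DecidableEq I] : SM J m →* ℕ where
  toFun s := (profile s.2).prod fun i e => m i ^ e
  map_one' := by
    show (profile (1 : W m)).prod _ = 1
    rw [profile_one, Finsupp.prod_zero_index]
  map_mul' s t := by
    show (profile (s.2 * t.2)).prod _ = _ * _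
    rw [profile_mul, Finsupp.prod_add_index' (fun a => pow_zero (m a)) (fun a b c => pow_add (m a) b c)]

lemma N0_apply (s : SM J m) : N0 J m s = (profile s.2).prod fun i e => m i ^ e := rfl

lemma N0_letter (hm : ∀ i, 2 ≤ m i) (i : I) (a : Fin (m i)) :
    N0 J m (1, dsOfHom i (of a)) = m i := by
  rw [N0_apply]
  show (profile (dsOfHom i (of a))).prod _ = m i
  rw [profile_dsOfHom, length_of, Finsupp.prod_single_index (h := fun i e => m i ^ e) (pow_zero (m i)), pow_one]

lemma N0_core (x : Multiplicative (J →₀ ℕ)) : N0 J m (x, 1) = 1 := by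
  rw [N0_apply]
  show (profile (1 : W m)).prod _ = 1
  rw [profile_one, Finsupp.prod_zero_index]

lemma N0_pos (hm : ∀ i, 2 ≤ m i) (s : SM J m) : 0 < N0 J m s := by
  rw [N0_apply]
  refine Finset.prod_pos (fun i _ => ?_)
  exact pow_pos (by have := hm i; omega) _

/-- the set of tuples with length profile `k` -/
def tupSet (m : I → ℕ) (k : I →₀ ℕ) : Set (W m) := {w | profile w = k}

noncomputable def fromVec (m : I → ℕ) (k : I →₀ ℕ)
    (f : ∀ i : k.support, List.Vector (Fin (m i)) (k i)) : W m :=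
  ⟨fun i => if h : i ∈ k.support then ofList (f ⟨i, h⟩).1 else 1, by
    refine (k.support.finite_toSet).subset (fun i hi => ?_)
    simp only [Set.mem_setOf_eq] at hi
    by_contra hc
    rw [dif_neg (by simpa using hc)] at hi
    exact hi rfl⟩

lemma co_fromVec_mem {k : I →₀ ℕ} {f : ∀ i : k.support, List.Vector (Fin (m i)) (k i)}
    {i : I} (h : i ∈ k.support) : co (fromVec m k f) i = (f ⟨i, h⟩).1 := by
  show toList (dite _ _ _) = _
  rw [dif_pos h]
  rfl

lemma co_fromVec_not_mem {k : I →₀ ℕ} {f : ∀ i : k.support, List.Vector (Fin (m i)) (k i)}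
    {i : I} (h : i ∉ k.support) : co (fromVec m k f) i = [] := by
  show toList (dite _ _ _) = _
  rw [dif_neg h]
  rfl

lemma fromVec_profile (k : I →₀ ℕ) (f : ∀ i : k.support, List.Vector (Fin (m i)) (k i)) :
    profile (fromVec m k f) = k := by
  ext i
  rw [profile_apply]
  by_cases h : i ∈ k.support
  · rw [co_fromVec_mem h, (f ⟨i, h⟩).2]
  · rw [co_fromVec_not_mem h, (Finsupp.notMem_support_iff.1 h)]
    rfl

noncomputable def tupEquiv (k : I →₀ ℕ) :
    ↥(tupSet m k) ≃ ∀ i : k.support, List.Vector (Fin (m i)) (k i) where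
  toFun w i := ⟨co w.1 i, by
    have : profile w.1 = k := w.2
    rw [← profile_apply, this]⟩
  invFun f := ⟨fromVec m k f, fromVec_profile k f⟩
  left_inv w := by
    apply Subtype.ext
    apply W_ext
    intro i
    by_cases h : i ∈ k.support
    · exact co_fromVec_mem (m := m) (k := k) (f := fun j => ⟨co w.1 j, by
        have : profile w.1 = k := w.2
        rw [← profile_apply, this]⟩) h
    · refine (co_fromVec_not_mem (m := m) (k := k) (f := fun j => ⟨co w.1 j, by
        have : profile w.1 = k := w.2
        rw [← profile_apply, this]⟩) h).trans ?_
      have : profile w.1 = k := w.2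
      have hk : k i = 0 := Finsupp.notMem_support_iff.1 h
      have h2 : (co w.1 i).length = 0 := by rw [← profile_apply, this, hk]
      exact (List.length_eq_zero_iff.1 h2).symm
  right_inv f := by
    funext i
    apply Subtype.ext
    show co (fromVec m k f) i.1 = (f i).1
    rw [co_fromVec_mem i.2]

lemma tupSet_finite (k : I →₀ ℕ) : (tupSet m k).Finite := by
  rw [← Set.finite_coe_iff]
  exact Finite.of_equiv _ (tupEquiv k).symm

lemma tupSet_ncard (k : I →₀ ℕ) :
    (tupSet m k).ncard = k.prod fun i e => m i ^ e := by
  have h1 : (tupSet m k).ncard = Nat.card ↥(tupSet m k) := rfl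
  rw [h1, Nat.card_congr (tupEquiv k)]
  have : ∀ i : k.support, Fintype.card (List.Vector (Fin (m i)) (k i)) = m i ^ k i := by
    intro i
    rw [card_vector, Fintype.card_fin]
  rw [Nat.card_eq_fintype_card, Fintype.card_pi]
  rw [Finset.prod_congr rfl (fun i _ => this i)]
  rw [Finset.prod_coe_sort k.support (fun i => m i ^ k i)]
  rfl

/-- padding an element to length profile `k`, staying comparable -/
noncomputable def padW (hm : ∀ i, 2 ≤ m i) (k : I →₀ ℕ) (u : W m) : W m :=
  ⟨fun i => ofList ((co u i ++ List.replicate (k i - (co u i).length) (let0 hm i)).take (k i)), by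
    refine (k.support.finite_toSet).subset (fun i hi => ?_)
    simp only [Set.mem_setOf_eq] at hi
    by_contra hc
    have : k i = 0 := by simpa [Finsupp.mem_support_iff] using hc
    rw [this] at hi
    exact hi rfl⟩

lemma co_padW (hm : ∀ i, 2 ≤ m i) (k : I →₀ ℕ) (u : W m) (i : I) :
    co (padW hm k u) i
      = (co u i ++ List.replicate (k i - (co u i).length) (let0 hm i)).take (k i) := rfl

lemma padW_profile (hm : ∀ i, 2 ≤ m i) (k : I →₀ ℕ) (u : W m) :
    profile (padW hm k u) = k := by
  ext i
  rw [profile_apply, co_padW, List.length_take, List.length_append, List.length_replicate]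
  omega

lemma padW_cmp (hm : ∀ i, 2 ≤ m i) (k : I →₀ ℕ) (u : W m) (i : I) :
    Cmp (co (padW hm k u) i) (co u i) := by
  rw [co_padW]
  rcases le_or_gt (co u i).length (k i) with h | h
  · have hlen : (co u i ++ List.replicate (k i - (co u i).length) (let0 hm i)).length = k i := by
      rw [List.length_append, List.length_replicate]; omega
    rw [List.take_of_length_le (le_of_eq hlen)]
    exact Or.inr (List.prefix_append _ _)
  · rw [List.take_append]
    have h0 : k i - (co u i).length = 0 := by omega
    rw [h0, List.take_zero, List.append_nil]
    exact Or.inl (List.take_prefix _ _)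

lemma dsOf_letter_ne_one (i : I) (a : Fin (m i)) : (dsOfHom i (of a) : W m) ≠ 1 := by
  intro h
  have : co (dsOfHom i (of a) : W m) i = co (1 : W m) i := by rw [h]
  rw [dsOfHom_apply, co_dsOf_self, toList_of, co_one] at this
  exact List.cons_ne_nil a [] this

lemma pair_mul (w u : W m) :
    ((1, w) : SM J m) * (1, u) = (1, w * u) := by
  apply Prod.ext
  · exact one_mul 1
  · rfl

lemma N_pair (N : SM J m →* ℕ) (s : SM J m) : N s = N (s.1, 1) * N (1, s.2) := by
  conv_lhs => rw [SM_decomp s]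
  rw [map_mul]

lemma cmp_singletons {α : Type*} {b c : α} (h : Cmp [b] [c]) : b = c := by
  rcases h with ⟨l, hl⟩ | ⟨l, hl⟩
  · simpa using (congrArg (fun t => t.head?) hl)
  · simpa using (congrArg (fun t => t.head?) hl).symm

section Scale

variable {N : SM J m →* ℕ} (hm : ∀ i, 2 ≤ m i) (hN : IsGenScale N)

include hm hN

lemma N_core_one (x : Multiplicative (J →₀ ℕ)) : N (x, 1) = 1 := by
  by_contra h
  set n := N (x, 1) with hn
  obtain ⟨⟨T, hT, hTfin, hTcard⟩, hAll⟩ := hN.2.2 n ⟨(x, 1), rfl⟩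
  obtain ⟨t, htT, hrel⟩ := hT.2.1 (x, 1) rfl
  have ht2 : t.2 = 1 := ((coreRel_iff hm).1 hrel).symm
  have htcore : t ∈ core (SM J m) := by rw [core_eq hm]; exact ht2
  have hn2 : 2 ≤ n := by
    have := hN.1 (x, 1)
    omega
  obtain ⟨t', ht'T, hne⟩ := Set.exists_ne_of_one_lt_ncard (by rw [hTcard]; omega) t
  exact htcore t' ((hAll T hT).1 t htT t' ht'T (Ne.symm hne))

lemma N_one_imp (s : SM J m) (h : N s = 1) : s.2 = 1 := by
  obtain ⟨⟨T, hT, hTfin, hTcard⟩, hAll⟩ := hN.2.2 1 ⟨1, map_one N⟩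
  obtain ⟨t, hTt⟩ := Set.ncard_eq_one.1 hTcard
  subst hTt
  have htcore : t ∈ core (SM J m) := fun s' => by
    obtain ⟨f, hf, hof⟩ := (hAll _ hT).2.2 s'
    rw [Set.mem_singleton_iff] at hf
    exact hf ▸ hof
  obtain ⟨t', ht', hrel⟩ := hT.2.1 s h
  rw [Set.mem_singleton_iff] at ht'
  subst ht'
  rw [(coreRel_iff hm).1 hrel]
  rw [core_eq hm] at htcore
  exact htcore

lemma N_letter_ge_two (i : I) (a : Fin (m i)) :
    2 ≤ N (1, dsOfHom i (of a)) := by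
  have h0 := hN.1 (1, dsOfHom i (of a))
  have h1 : N (1, dsOfHom i (of a)) ≠ 1 := by
    intro h
    exact dsOf_letter_ne_one i a (N_one_imp hm hN _ h)
  omega

end Scale

section Scale2
variable {N : SM J m →* ℕ} (hm : ∀ i, 2 ≤ m i) (hN : IsGenScale N)
include hm hN

lemma key_induction :
    ∀ (n : ℕ) (i : I) (a : Fin (m i)), N (1, dsOfHom i (of a)) = n →
      m i = n ∧ ∀ b : Fin (m i), N (1, dsOfHom i (of b)) = n := by
  intro n
  induction n using Nat.strong_induction_on with
  | _ n IH =>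
  intro i a hna
  have hn2 : 2 ≤ n := hna ▸ N_letter_ge_two hm hN i a
  obtain ⟨⟨T, hT, hTfin, hTcard⟩, hAll⟩ := hN.2.2 n ⟨(1, dsOfHom i (of a)), hna⟩
  have hAcc := (hAll T hT).1
  have hFnd := (hAll T hT).2
  have NT : ∀ t ∈ T, N (1, t.2) = n := by
    intro t ht
    have h1 := hT.1 t ht
    rw [N_pair N t, N_core_one hm hN] at h1
    simpa using h1
  obtain ⟨t₀, ht₀T, hrel₀⟩ := hT.2.1 (1, dsOfHom i (of a)) hna
  have ht₀2 : t₀.2 = dsOfHom i (of a) := ((coreRel_iff hm).1 hrel₀).symm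
  have step2 : ∀ t ∈ T, ∃ c : Fin (m i), t.2 = dsOfHom i (of c) := by
    intro t ht
    have hne : co t.2 i ≠ [] := by
      intro hnil
      have hcmp : ∀ j, Cmp (co t.2 j) (co t₀.2 j) := by
        intro j
        rcases eq_or_ne j i with rfl | hj
        · rw [hnil]; exact Or.inl List.nil_prefix
        · rw [ht₀2, dsOfHom_apply, co_dsOf_ne hj]; exact Or.inr List.nil_prefix
      have heq : t = t₀ := by
        by_contra hne'
        exact not_orth_of_cmp hcmp (hAcc t ht t₀ ht₀T hne')
      rw [heq, ht₀2, dsOfHom_apply, co_dsOf_self, toList_of] at hnil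
      simp at hnil
    obtain ⟨c, r, hcr⟩ := List.exists_cons_of_ne_nil hne
    have hdec : t.2 = dsOfHom i (of c) * Wupdate t.2 i (ofList r) := decomp_head t.2 i c r hcr
    have hmul : N (1, t.2) = N (1, dsOfHom i (of c)) * N (1, Wupdate t.2 i (ofList r)) := by
      rw [← map_mul, pair_mul, ← hdec]
    have hNt := NT t ht
    by_cases hv : N (1, Wupdate t.2 i (ofList r)) = 1
    · refine ⟨c, ?_⟩
      have hup : Wupdate t.2 i (ofList r) = 1 :=
        N_one_imp hm hN (1, Wupdate t.2 i (ofList r)) hv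
      rw [hdec, hup, mul_one]
    · exfalso
      have hc2 : 2 ≤ N (1, dsOfHom i (of c)) := N_letter_ge_two hm hN i c
      have hv0 : N (1, Wupdate t.2 i (ofList r)) ≠ 0 := hN.1 _
      have hlt : N (1, dsOfHom i (of c)) < n := by
        rw [hNt] at hmul
        have hv2 : 2 ≤ N (1, Wupdate t.2 i (ofList r)) := by omega
        nlinarith [hmul, hc2, hv2]
      obtain ⟨hmi, hall⟩ := IH _ hlt i c rfl
      have := hall a
      omega
  have step3 : ∀ c : Fin (m i), ∃ t, t ∈ T ∧ t.2 = dsOfHom i (of c) := by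
    intro c
    obtain ⟨t, htT, hno⟩ := hFnd.2 (1, dsOfHom i (of c))
    obtain ⟨b, hb⟩ := step2 t htT
    have hbc : b = c := by
      by_contra hbc
      refine hno (orth_of_incmp i ?_)
      have e1 : co ((1, dsOfHom i (of c)) : SM J m).2 i = ([c] : List _) := by
        show co (dsOfHom i (of c) : W m) i = _
        rw [dsOfHom_apply, co_dsOf_self, toList_of]
      have e2 : co t.2 i = ([b] : List _) := by
        rw [hb, dsOfHom_apply, co_dsOf_self, toList_of]
      rw [e1, e2]
      intro hcmp
      exact hbc (cmp_singletons hcmp)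
    exact ⟨t, htT, hbc ▸ hb⟩
  choose tc htcT htc2 using step3
  have hvals : ∀ b : Fin (m i), N (1, dsOfHom i (of b)) = n := by
    intro b
    rw [← htc2 b]
    exact NT _ (htcT b)
  have hbij : Function.Bijective (fun c : Fin (m i) => (⟨tc c, htcT c⟩ : ↥T)) := by
    constructor
    · intro c d hcd
      have : (tc c).2 = (tc d).2 := by rw [Subtype.mk.injEq] at hcd; rw [hcd]
      rw [htc2 c, htc2 d] at this
      have h2 : co (dsOfHom i (of c) : W m) i = co (dsOfHom i (of d) : W m) i := by rw [this]
      rw [dsOfHom_apply, dsOfHom_apply, co_dsOf_self, co_dsOf_self, toList_of, toList_of] at h2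
      simpa using h2
    · rintro ⟨t, ht⟩
      obtain ⟨c, hc⟩ := step2 t ht
      refine ⟨c, ?_⟩
      rw [Subtype.mk.injEq]
      exact (hT.2.2 (tc c) (htcT c) t ht ((coreRel_iff hm).2 (by rw [htc2 c, hc])))
  have hcard : Nat.card ↥T = m i := by
    rw [← Nat.card_congr (Equiv.ofBijective _ hbij)]
    simp [Nat.card_eq_fintype_card]
  have : T.ncard = Nat.card ↥T := rfl
  exact ⟨by omega, hvals⟩

end Scale2

lemma N_letter_val {N : SM J m →* ℕ} (hm : ∀ i, 2 ≤ m i) (hN : IsGenScale N)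
    (i : I) (a : Fin (m i)) : N (1, dsOfHom i (of a)) = m i :=
  (key_induction hm hN (N (1, dsOfHom i (of a))) i a rfl).1.symm

lemma N_eq_N0 {N : SM J m →* ℕ} (hm : ∀ i, 2 ≤ m i) (hN : IsGenScale N) :
    N = N0 J m := by
  refine hom_ext_SM (fun x => ?_) (fun i a => ?_)
  · rw [N_core_one hm hN, N0_core]
  · rw [N_letter_val hm hN, N0_letter hm]

lemma N0_tup (w : W m) : N0 J m (1, w) = (profile w).prod fun i e => m i ^ e := rfl

lemma profile_eq_of_val_eq (hind : ∀ k k' : I →₀ ℕ,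
      (k.prod fun i e => m i ^ e) = (k'.prod fun i e => m i ^ e) → k = k')
    {w : W m} {k : I →₀ ℕ}
    (h : N0 J m (1, w) = k.prod fun i e => m i ^ e) : profile w = k :=
  hind _ _ h

lemma N0_genScale (hm : ∀ i, 2 ≤ m i) [Nonempty I]
    (hind : ∀ k k' : I →₀ ℕ,
      (k.prod fun i e => m i ^ e) = (k'.prod fun i e => m i ^ e) → k = k') :
    IsGenScale (N0 J m) := by
  refine ⟨fun s => (N0_pos hm s).ne', ?_, ?_⟩
  · obtain ⟨i⟩ := ‹Nonempty I›
    refine ⟨(1, dsOfHom i (of (let0 hm i))), ?_⟩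
    rw [N0_letter hm]
    have := hm i
    omega
  · rintro n ⟨s, hs⟩
    set k := profile s.2 with hk
    have hkn : (k.prod fun i e => m i ^ e) = n := hs
    have hval : ∀ w : W m, w ∈ tupSet m k → N0 J m (1, w) = n := by
      intro w hw
      rw [N0_tup, hw, hkn]
    set T : Set (SM J m) := (fun w => ((1 : Multiplicative (J →₀ ℕ)), w)) '' tupSet m k with hT
    have hinj : Function.Injective (fun w : W m => ((1 : Multiplicative (J →₀ ℕ)), w)) := by
      intro w w' h
      exact congrArg Prod.snd h
    have htrans : IsTransversal (N0 J m) n T := by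
      refine ⟨?_, ?_, ?_⟩
      · rintro t ⟨w, hw, rfl⟩
        exact hval w hw
      · intro s' hs'
        have hprof : profile s'.2 = k := by
          apply hind
          have h1 : ((profile s'.2).prod fun i e => m i ^ e) = N0 J m s' := by
            rw [N_pair (N0 J m) s', N0_core, one_mul]; rfl
          rw [h1, hs', hkn]
        refine ⟨(1, s'.2), ⟨s'.2, hprof, rfl⟩, (coreRel_iff hm).2 rfl⟩
      · rintro t ⟨w, hw, rfl⟩ t' ⟨w', hw', rfl⟩ hrel
        have := (coreRel_iff hm).1 hrel
        simp only at this
        rw [this]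
    have hacc : ∀ T' : Set (SM J m), IsTransversal (N0 J m) n T' →
        Accurate T' ∧ IsFoundationSet T' := by
      intro T' hT'
      have hprofT : ∀ t ∈ T', profile t.2 = k := by
        intro t ht
        apply hind
        have h1 := hT'.1 t ht
        have h2 : ((profile t.2).prod fun i e => m i ^ e) = N0 J m t := by
          rw [N_pair (N0 J m) t, N0_core, one_mul]; rfl
        rw [h2, h1, hkn]
      constructor
      · intro t ht t' ht' hne
        have hsne : t.2 ≠ t'.2 := by
          intro h2
          exact hne (hT'.2.2 t ht t' ht' ((coreRel_iff hm).2 h2))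
        have : ∃ i, co t.2 i ≠ co t'.2 i := by
          by_contra hc
          push_neg at hc
          exact hsne (W_ext hc)
        obtain ⟨i, hi⟩ := this
        refine orth_of_incmp i (fun hcmp => hi ?_)
        have hlen : (co t.2 i).length = (co t'.2 i).length := by
          rw [← profile_apply, ← profile_apply, hprofT t ht, hprofT t' ht']
        rcases hcmp with h | h
        · exact h.eq_of_length hlen
        · exact (h.eq_of_length hlen.symm).symm
      · constructor
        · have himg : (Prod.snd '' T').Finite := by
            refine (tupSet_finite k).subset ?_
            rintro w ⟨t, ht, rfl⟩
            exact hprofT t ht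
          refine Set.Finite.of_finite_image ?_ ?_ (f := fun t : SM J m => t.2)
          · exact himg
          · intro t ht t' ht' h2
            exact hT'.2.2 t ht t' ht' ((coreRel_iff hm).2 h2)
        · intro s'
          set w := padW hm k s'.2 with hw
          have hwn : N0 J m (1, w) = n := hval w (padW_profile hm k s'.2)
          obtain ⟨t, htT', hrel⟩ := hT'.2.1 (1, w) hwn
          have ht2 : t.2 = w := ((coreRel_iff hm).1 hrel).symm
          refine ⟨t, htT', not_orth_of_cmp (fun i => ?_)⟩
          rw [ht2]
          exact padW_cmp hm k s'.2 i
    exact ⟨⟨T, htrans, ((tupSet_finite k).image _), by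
      rw [hT, Set.ncard_image_of_injective _ hinj, tupSet_ncard, hkn]⟩, hacc⟩

lemma indep_of_genScale (hm : ∀ i, 2 ≤ m i) {N : SM J m →* ℕ} (hN : IsGenScale N) :
    ∀ k k' : I →₀ ℕ,
      (k.prod fun i e => m i ^ e) = (k'.prod fun i e => m i ^ e) → k = k' := by
  intro k k' hkk
  by_contra hne
  have hN0 : IsGenScale (N0 J m) := N_eq_N0 hm hN ▸ hN
  set n := k.prod fun i e => m i ^ e with hn
  set wk := padW hm k 1 with hwk
  set wk' := padW hm k' 1 with hwk'
  have hpk : profile wk = k := padW_profile hm k 1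
  have hpk' : profile wk' = k' := padW_profile hm k' 1
  have hval : N0 J m (1, wk) = n := by rw [N0_tup, hpk]
  obtain ⟨⟨T, hT, hTfin, hTcard⟩, -⟩ := hN0.2.2 n ⟨(1, wk), hval⟩
  have hvals : ∀ w ∈ tupSet m k ∪ {wk'}, N0 J m (1, w) = n := by
    rintro w (hw | hw)
    · rw [N0_tup, (hw : profile w = k)]
    · rw [Set.mem_singleton_iff] at hw
      rw [hw, N0_tup, hpk', ← hkk]
  have hex : ∀ w : ↥(tupSet m k ∪ {wk'}), ∃ t, t ∈ T ∧ t.2 = w.1 := by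
    intro w
    obtain ⟨t, ht, hrel⟩ := hT.2.1 (1, w.1) (hvals w.1 w.2)
    exact ⟨t, ht, ((coreRel_iff hm).1 hrel).symm⟩
  choose F hFT hF2 using hex
  have : Finite ↥T := hTfin.to_subtype
  have hinj : Function.Injective (fun w : ↥(tupSet m k ∪ {wk'}) => (⟨F w, hFT w⟩ : ↥T)) := by
    intro w w' h
    apply Subtype.ext
    have hFw : F w = F w' := congrArg Subtype.val h
    rw [← hF2 w, ← hF2 w', hFw]
  have hle := Nat.card_le_card_of_injective _ hinj
  have hcT : Nat.card ↥T = n := hTcard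
  have hdisj : Disjoint (tupSet m k) {wk'} := by
    rw [Set.disjoint_singleton_right]
    intro h
    have h2 : profile wk' = k := h
    exact hne (h2.symm.trans hpk')
  have hunion : (tupSet m k ∪ {wk'}).ncard = n + 1 := by
    rw [Set.ncard_union_eq hdisj (tupSet_finite k) (Set.finite_singleton _),
      tupSet_ncard, Set.ncard_singleton, hn]
  rw [Nat.card_coe_set_eq, Nat.card_coe_set_eq, hunion, hTcard] at hle
  omega

end GSAux

/-- Proposition 4.6: `M ⊕ ⊕ᵢ F⁺_(mᵢ)` (with `M` free abelian) admits a generalised scale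
iff `(mᵢ)` is rationally independent; in that case it is unique and restricts to the
unique generalised scale `w ↦ mᵢ ^ length w` on each `F⁺_(mᵢ)`. -/
theorem gen_scale_direct_sum_free_monoids {J I : Type*} [DecidableEq I] [Nonempty I]
    (m : I → ℕ) (hm : ∀ i, 2 ≤ m i) :
    ((∃ N : (Multiplicative (J →₀ ℕ) × ↥(finSupp (fun i => FreeMonoid (Fin (m i))))) →* ℕ, IsGenScale N) ↔
      (∀ k k' : I →₀ ℕ,
        (k.prod fun i e => m i ^ e) = (k'.prod fun i e => m i ^ e) → k = k')) ∧
    (∀ N N' : (Multiplicative (J →₀ ℕ) × ↥(finSupp (fun i => FreeMonoid (Fin (m i))))) →* ℕ, IsGenScale N → IsGenScale N' → N = N') ∧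
    (∀ N : (Multiplicative (J →₀ ℕ) × ↥(finSupp (fun i => FreeMonoid (Fin (m i))))) →* ℕ, IsGenScale N →
      ∀ (i : I) (w : FreeMonoid (Fin (m i))),
        N (1, dsOf (fun i => FreeMonoid (Fin (m i))) i w) = m i ^ w.length) := by
  refine ⟨⟨?_, ?_⟩, ?_, ?_⟩
  · rintro ⟨N, hN⟩
    exact GSAux.indep_of_genScale hm hN
  · intro hind
    exact ⟨GSAux.N0 J m, GSAux.N0_genScale hm hind⟩
  · intro N N' hN hN'
    rw [GSAux.N_eq_N0 hm hN, GSAux.N_eq_N0 hm hN']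
  · intro N hN i w
    rw [GSAux.N_eq_N0 hm hN]
    have h1 : (GSAux.N0 J m) (1, dsOf (fun i => FreeMonoid (Fin (m i))) i w)
        = (GSAux.N0 J m) (1, GSAux.dsOfHom i w) := rfl
    rw [h1, GSAux.N0_tup, GSAux.profile_dsOfHom,
      Finsupp.prod_single_index (h := fun i e => m i ^ e) (pow_zero (m i))]
end

section
/- Let Γ = (V,E) be a coconnected graph with |V| ≥ 2 and (S_v)_{v∈V} a family of nontrivial right LCM monoids. Then the group of invertible elements of the graph product S_Γ is the graph product of the groups (S_v*)_{v∈V}, and the core of S_Γ equals its group of invertibles: (S_Γ)_c = S_Γ*. -/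
set_option maxHeartbeats 1000000
set_option linter.unusedSectionVars false
set_option linter.unusedVariables false


/-- The congruence on the free product implementing the graph product relations. -/
def graphProductCon {V : Type*} (G : SimpleGraph V) (S : V → Type*) [∀ v, Monoid (S v)] :
    Con (Monoid.CoprodI S) :=
  conGen (fun x y => ∃ (v w : V) (s : S v) (t : S w), G.Adj v w ∧
    x = Monoid.CoprodI.of s * Monoid.CoprodI.of t ∧
    y = Monoid.CoprodI.of t * Monoid.CoprodI.of s)

/-- The graph product of a family of monoids over a graph. -/
def GraphProduct {V : Type*} (G : SimpleGraph V) (S : V → Type*) [∀ v, Monoid (S v)] :=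
  (graphProductCon G S).Quotient

instance {V : Type*} (G : SimpleGraph V) (S : V → Type*) [∀ v, Monoid (S v)] :
    Monoid (GraphProduct G S) :=
  inferInstanceAs (Monoid (graphProductCon G S).Quotient)

/-- The quotient map from the free product onto the graph product. -/
def GraphProduct.mk {V : Type*} (G : SimpleGraph V) (S : V → Type*) [∀ v, Monoid (S v)] :
    Monoid.CoprodI S →* GraphProduct G S := Con.mk' _

namespace GPW
section
variable {V : Type*} (G : SimpleGraph V) {S : V → Type*} [∀ v, Monoid (S v)]

/-- Words: lists of letters. -/
abbrev Wd (S : V → Type*) := List ((v : V) × S v)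

/-- Trichotomy for two one-point splittings of the same list. -/
theorem split_tri {α : Type*} : ∀ (x : List α) (x' : List α) (a a' : α) (y y' : List α),
    x ++ a :: y = x' ++ a' :: y' →
    (x = x' ∧ a = a' ∧ y = y') ∨
    (∃ m, x' = x ++ a :: m ∧ y = m ++ a' :: y') ∨
    (∃ m, x = x' ++ a' :: m ∧ y' = m ++ a :: y) := by
  intro x
  induction x with
  | nil =>
    intro x' a a' y y' h
    cases x' with
    | nil => simp_all
    | cons b x₂ =>
      simp only [List.nil_append, List.cons_append, List.cons.injEq] at h
      exact Or.inr (Or.inl ⟨x₂, by simp [h.1], h.2⟩)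
  | cons b x₁ ih =>
    intro x' a a' y y' h
    cases x' with
    | nil =>
      simp only [List.nil_append, List.cons_append, List.cons.injEq] at h
      exact Or.inr (Or.inr ⟨x₁, by simp [h.1], h.2.symm⟩)
    | cons c x₂ =>
      simp only [List.cons_append, List.cons.injEq] at h
      rcases ih x₂ a a' y y' h.2 with ⟨h1, h2, h3⟩ | ⟨m, hm1, hm2⟩ | ⟨m, hm1, hm2⟩
      · exact Or.inl ⟨by rw [h.1, h1], h2, h3⟩
      · exact Or.inr (Or.inl ⟨m, by rw [hm1, h.1, List.cons_append], hm2⟩)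
      · exact Or.inr (Or.inr ⟨m, by rw [hm1, h.1, List.cons_append], hm2⟩)

/-- A word is bad if it has two letters at the same vertex such that everything
in between is adjacent to that vertex. -/
def Bad (w : Wd S) : Prop :=
  ∃ (x y z : Wd S) (a b : (v : V) × S v),
    w = x ++ a :: (y ++ b :: z) ∧ a.1 = b.1 ∧ ∀ l ∈ y, G.Adj l.1 a.1

/-- A reduced word. -/
def Red (w : Wd S) : Prop := (∀ l ∈ w, l.2 ≠ 1) ∧ ¬ Bad G w

/-- `v` has a front position in `w`. -/
def HasFront (v : V) (w : Wd S) : Prop :=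
  ∃ (x : Wd S) (t : S v) (y : Wd S), w = x ++ ⟨v, t⟩ :: y ∧ ∀ l ∈ x, G.Adj l.1 v

/-- Elementary swap of two adjacent letters with adjacent vertices. -/
inductive Swap : Wd S → Wd S → Prop
  | mk (x y : Wd S) (a b : (v : V) × S v) (h : G.Adj a.1 b.1) :
      Swap (x ++ a :: b :: y) (x ++ b :: a :: y)

/-- Shuffle equivalence. -/
def SwEq : Wd S → Wd S → Prop := Relation.ReflTransGen (Swap G)

theorem Swap.symm' {w w' : Wd S} (h : Swap G w w') : Swap G w' w := by
  rcases h with ⟨x, y, a, b, h⟩; exact Swap.mk x y b a h.symm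

theorem SwEq.refl (w : Wd S) : SwEq G w w := Relation.ReflTransGen.refl

theorem SwEq.symm {w w' : Wd S} (h : SwEq G w w') : SwEq G w' w := by
  induction h with
  | refl => exact Relation.ReflTransGen.refl
  | tail _ hs ih => exact Relation.ReflTransGen.head (Swap.symm' G hs) ih

theorem SwEq.trans {w₁ w₂ w₃ : Wd S} (h : SwEq G w₁ w₂) (h' : SwEq G w₂ w₃) : SwEq G w₁ w₃ :=
  Relation.ReflTransGen.trans h h'

theorem SwEq.single {w w' : Wd S} (h : Swap G w w') : SwEq G w w' :=
  Relation.ReflTransGen.single h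

theorem Swap.append_left {w w' : Wd S} (c : Wd S) (h : Swap G w w') :
    Swap G (c ++ w) (c ++ w') := by
  rcases h with ⟨x, y, a, b, h⟩
  have := Swap.mk (G := G) (c ++ x) y a b h
  simpa using this

theorem SwEq.append_left {w w' : Wd S} (c : Wd S) (h : SwEq G w w') :
    SwEq G (c ++ w) (c ++ w') := by
  induction h with
  | refl => exact SwEq.refl G _
  | tail _ h ih => exact SwEq.trans G ih (SwEq.single G (Swap.append_left G c h))

theorem SwEq.cons {w w' : Wd S} (a : (v : V) × S v) (h : SwEq G w w') :
    SwEq G (a :: w) (a :: w') := by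
  have := SwEq.append_left G [a] h; simpa using this

/-- Shuffling a letter to the front past letters adjacent to its vertex. -/
theorem swEq_shuffle (l₀ : (v : V) × S v) :
    ∀ (x y : Wd S), (∀ l ∈ x, G.Adj l.1 l₀.1) → SwEq G (x ++ l₀ :: y) (l₀ :: (x ++ y)) := by
  intro x
  induction x with
  | nil => intro y _; simp [SwEq.refl]
  | cons a x' ih =>
    intro y hx
    have h1 : SwEq G (a :: (x' ++ l₀ :: y)) (a :: l₀ :: (x' ++ y)) :=
      SwEq.cons G a (ih y (fun l hl => hx l (List.mem_cons_of_mem a hl)))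
    have h2 : Swap G ([] ++ a :: l₀ :: (x' ++ y)) ([] ++ l₀ :: a :: (x' ++ y)) :=
      Swap.mk [] (x' ++ y) a l₀ (hx a List.mem_cons_self)
    simp only [List.nil_append] at h2
    exact SwEq.trans G (by simpa using h1) (SwEq.single G h2)

/-- A front position is unique (for any word), and two front positions at
different vertices force adjacency. -/
theorem front_compare {v w : V} {x x' y y' : Wd S} {t : S v} {t' : S w}
    (h : x ++ (⟨v, t⟩ : (v : V) × S v) :: y = x' ++ (⟨w, t'⟩ : (v : V) × S v) :: y')
    (hx : ∀ l ∈ x, G.Adj l.1 v) (hx' : ∀ l ∈ x', G.Adj l.1 w) :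
    (x = x' ∧ (⟨v, t⟩ : (v : V) × S v) = ⟨w, t'⟩ ∧ y = y') ∨ G.Adj v w := by
  rcases split_tri x x' _ _ y y' h with ⟨h1, h2, h3⟩ | ⟨m, hm1, _⟩ | ⟨m, hm1, _⟩
  · exact Or.inl ⟨h1, h2, h3⟩
  · right
    have : (⟨v, t⟩ : (v : V) × S v) ∈ x' := by rw [hm1]; simp
    exact hx' _ this
  · right
    have : (⟨w, t'⟩ : (v : V) × S v) ∈ x := by rw [hm1]; simp
    exact (hx _ this).symm

theorem front_unique {v : V} {x x' y y' : Wd S} {t t' : S v}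
    (h : x ++ (⟨v, t⟩ : (v : V) × S v) :: y = x' ++ (⟨v, t'⟩ : (v : V) × S v) :: y')
    (hx : ∀ l ∈ x, G.Adj l.1 v) (hx' : ∀ l ∈ x', G.Adj l.1 v) :
    x = x' ∧ t = t' ∧ y = y' := by
  rcases front_compare G h hx hx' with ⟨h1, h2, h3⟩ | hadj
  · refine ⟨h1, ?_, h3⟩
    have := (Sigma.mk.inj_iff.1 h2).2
    exact eq_of_heq this
  · exact absurd hadj (G.irrefl)

theorem not_front_of_front {v w : V} (hvw : v ≠ w) (hadj : ¬ G.Adj v w) {u : Wd S}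
    (h : HasFront G v u) (h' : HasFront G w u) : False := by
  obtain ⟨x, t, y, rfl, hx⟩ := h
  obtain ⟨x', t', y', heq, hx'⟩ := h'
  rcases front_compare G heq hx hx' with ⟨_, h2, _⟩ | h2
  · exact hvw (congrArg Sigma.fst h2)
  · exact hadj h2


open Classical in
noncomputable def actW (v : V) (s : S v) (w : Wd S) : Wd S :=
  if hs : s = 1 then w
  else if h : HasFront G v w then
    let x := Classical.choose h
    let t := Classical.choose (Classical.choose_spec h)
    let y := Classical.choose (Classical.choose_spec (Classical.choose_spec h))
    if s * t = 1 then x ++ y else x ++ ⟨v, s * t⟩ :: y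
  else ⟨v, s⟩ :: w

theorem actW_one (v : V) (w : Wd S) : actW G v (1 : S v) w = w := by
  simp [actW]

theorem actW_not_front {v : V} {s : S v} {w : Wd S} (hs : s ≠ 1) (h : ¬ HasFront G v w) :
    actW G v s w = ⟨v, s⟩ :: w := by
  simp [actW, hs, h]

open Classical in
theorem actW_front {v : V} {s t : S v} {x y : Wd S} {w : Wd S} (hs : s ≠ 1)
    (hw : w = x ++ ⟨v, t⟩ :: y) (hx : ∀ l ∈ x, G.Adj l.1 v) :
    actW G v s w = if s * t = 1 then x ++ y else x ++ ⟨v, s * t⟩ :: y := by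
  have hf : HasFront G v w := ⟨x, t, y, hw, hx⟩
  have hspec := Classical.choose_spec (Classical.choose_spec (Classical.choose_spec hf))
  obtain ⟨heq, hadj⟩ := hspec
  obtain ⟨e1, e2, e3⟩ := front_unique G (hw.symm.trans heq) hx hadj
  subst e1; subst e2; subst e3
  simp only [actW, dif_neg hs, dif_pos hf]


theorem red_nil : Red G ([] : Wd S) := by
  constructor
  · simp
  · rintro ⟨x, y, z, a, b, h, -, -⟩
    have := congrArg List.length h
    simp at this

theorem notFront_cons_of_red {v : V} {s : S v} {w : Wd S} (h : Red G (⟨v, s⟩ :: w)) :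
    ¬ HasFront G v w := by
  rintro ⟨x, t, y, rfl, hx⟩
  exact h.2 ⟨[], x, y, ⟨v, s⟩, ⟨v, t⟩, by simp, rfl, hx⟩

theorem notFront_delete {v : V} {x y : Wd S} {t : S v} (hred : Red G (x ++ ⟨v, t⟩ :: y))
    (hx : ∀ l ∈ x, G.Adj l.1 v) : ¬ HasFront G v (x ++ y) := by
  rintro ⟨x₁, t₁, y₁, heq, hx₁⟩
  rcases List.append_eq_append_iff.1 heq with ⟨a', ha1, ha2⟩ | ⟨c', hc1, hc2⟩
  · subst ha1; subst ha2
    exact hred.2 ⟨x, a', y₁, ⟨v, t⟩, ⟨v, t₁⟩, by simp, rfl,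
      fun l hl => hx₁ l (by simp [hl])⟩
  · cases c' with
    | nil =>
      simp only [List.nil_append] at hc2
      exact hred.2 ⟨x, [], y₁, ⟨v, t⟩, ⟨v, t₁⟩, by simp [← hc2], rfl, by simp⟩
    | cons hd tl =>
      rw [List.cons_append] at hc2
      injection hc2 with e1 e2
      subst hc1
      have h2 := hx hd (by simp)
      rw [← e1] at h2
      exact G.irrefl h2

theorem bad_value {x y : Wd S} {v : V} {a b : S v} (h : Bad G (x ++ ⟨v, a⟩ :: y)) :
    Bad G (x ++ ⟨v, b⟩ :: y) := by
  obtain ⟨x₁, y₁, z₁, p, q, heq, hpq, hy₁⟩ := h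
  rcases split_tri x x₁ ⟨v, a⟩ p y (y₁ ++ q :: z₁) heq with
    ⟨e1, e2, e3⟩ | ⟨m, hm1, hm2⟩ | ⟨m, hm1, hm2⟩
  · have hq : v = q.1 := by rw [← hpq, ← e2]
    refine ⟨x, y₁, z₁, ⟨v, b⟩, q, by rw [e3], hq, ?_⟩
    intro l hl
    have := hy₁ l hl
    rwa [← e2] at this
  · subst hm1; subst hm2
    exact ⟨x ++ ⟨v, b⟩ :: m, y₁, z₁, p, q, by simp, hpq, hy₁⟩
  · rcases split_tri y₁ m q ⟨v, a⟩ z₁ y hm2 with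
      ⟨e1, e2, e3⟩ | ⟨m₂, hn1, hn2⟩ | ⟨m₂, hn1, hn2⟩
    · subst hm1
      have hq : p.1 = v := by rw [hpq, e2]
      refine ⟨x₁, m, y, p, ⟨v, b⟩, by simp, hq, ?_⟩
      intro l hl
      exact hy₁ l (by rw [e1]; exact hl)
    · subst hm1; subst hn1; subst hn2
      exact ⟨x₁, y₁, m₂ ++ ⟨v, b⟩ :: y, p, q, by simp, hpq, hy₁⟩
    · subst hm1; subst hn1; subst hn2
      refine ⟨x₁, m ++ ⟨v, b⟩ :: m₂, z₁, p, q, by simp, hpq, ?_⟩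
      intro l hl
      simp only [List.mem_append, List.mem_cons] at hl
      rcases hl with h1 | h1 | h1
      · exact hy₁ l (by simp [h1])
      · have := hy₁ ⟨v, a⟩ (by simp)
        rw [h1]; exact this
      · exact hy₁ l (by simp [h1])

theorem red_replace {x y : Wd S} {v : V} {s t : S v} (hred : Red G (x ++ ⟨v, t⟩ :: y))
    (hst : s * t ≠ 1) : Red G (x ++ ⟨v, s * t⟩ :: y) := by
  constructor
  · intro l hl
    simp only [List.mem_append, List.mem_cons] at hl
    rcases hl with h1 | h1 | h1
    · exact hred.1 l (by simp [h1])
    · rw [h1]; exact hst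
    · exact hred.1 l (by simp [h1])
  · intro hb; exact hred.2 (bad_value G hb)

theorem red_delete {x y : Wd S} {v : V} {t : S v} (hred : Red G (x ++ ⟨v, t⟩ :: y))
    (hx : ∀ l ∈ x, G.Adj l.1 v) : Red G (x ++ y) := by
  constructor
  · intro l hl
    refine hred.1 l ?_
    simp only [List.mem_append, List.mem_cons] at hl ⊢
    tauto
  · rintro ⟨x₁, y₁, z₁, p, q, heq, hpq, hy₁⟩
    rcases List.append_eq_append_iff.1 heq with ⟨a', ha1, ha2⟩ | ⟨c', hc1, hc2⟩
    · subst ha1; subst ha2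
      exact hred.2 ⟨x ++ ⟨v, t⟩ :: a', y₁, z₁, p, q, by simp, hpq, hy₁⟩
    · cases c' with
      | nil =>
        simp only [List.append_nil] at hc1
        simp only [List.nil_append] at hc2
        exact hred.2 ⟨x ++ [⟨v, t⟩], y₁, z₁, p, q, by rw [← hc2]; simp, hpq, hy₁⟩
      | cons hd tl =>
        rw [List.cons_append] at hc2
        injection hc2 with e1 e2
        subst hc1
        obtain rfl : p = hd := e1
        have hadjp : G.Adj v p.1 := (hx p (by simp)).symm
        rcases List.append_eq_append_iff.1 e2 with ⟨a₂, hb1, hb2⟩ | ⟨c₂, hb1, hb2⟩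
        · cases a₂ with
          | nil =>
            simp only [List.append_nil] at hb1
            simp only [List.nil_append] at hb2
            refine hred.2 ⟨x₁, tl ++ [⟨v, t⟩], z₁, p, q, by rw [← hb2]; simp, hpq, ?_⟩
            intro l hl
            simp only [List.mem_append, List.mem_singleton] at hl
            rcases hl with h1 | h1
            · exact hy₁ l (by rw [← hb1]; exact h1)
            · rw [h1]; exact hadjp
          | cons hd₂ tl₂ =>
            rw [List.cons_append] at hb2
            injection hb2 with f1 f2
            subst hb1; subst f2
            obtain rfl : q = hd₂ := f1
            exact hred.2 ⟨x₁, y₁, tl₂ ++ ⟨v, t⟩ :: y, p, q, by simp, hpq, hy₁⟩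
        · subst hb1; subst hb2
          refine hred.2 ⟨x₁, tl ++ ⟨v, t⟩ :: c₂, z₁, p, q, by simp, hpq, ?_⟩
          intro l hl
          simp only [List.mem_append, List.mem_cons] at hl
          rcases hl with h1 | h1 | h1
          · exact hy₁ l (by simp [h1])
          · rw [h1]; exact hadjp
          · exact hy₁ l (by simp [h1])

theorem red_prepend {w : Wd S} {v : V} {s : S v} (hred : Red G w)
    (hnf : ¬ HasFront G v w) (hs : s ≠ 1) : Red G (⟨v, s⟩ :: w) := by
  constructor
  · intro l hl
    rcases List.mem_cons.1 hl with h1 | h1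
    · rw [h1]; exact hs
    · exact hred.1 l h1
  · rintro ⟨x₁, y₁, z₁, p, q, heq, hpq, hy₁⟩
    cases x₁ with
    | nil =>
      simp only [List.nil_append] at heq
      injection heq with e1 e2
      obtain ⟨qv, qs⟩ := q
      have hqv : qv = v := by rw [← e1] at hpq; exact hpq.symm
      subst hqv
      refine hnf ⟨y₁, qs, z₁, e2, ?_⟩
      intro l hl
      have := hy₁ l hl
      rwa [← e1] at this
    | cons hd tl =>
      rw [List.cons_append] at heq
      injection heq with e1 e2
      exact hred.2 ⟨tl, y₁, z₁, p, q, e2, hpq, hy₁⟩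

theorem hasFront_transport {v w : V} (hadj : G.Adj v w) {x y M : Wd S} {r : S v}
    (hM : ∀ l ∈ M, l.1 = v) (hf : HasFront G w (x ++ (M ++ y))) :
    HasFront G w (x ++ ⟨v, r⟩ :: y) := by
  obtain ⟨x₂, u, y₂, heq, hx₂⟩ := hf
  rcases List.append_eq_append_iff.1 heq with ⟨a', ha1, ha2⟩ | ⟨c', hc1, hc2⟩
  · subst ha1
    rcases List.append_eq_append_iff.1 ha2 with ⟨b', hb1, hb2⟩ | ⟨c₂, hd1, hd2⟩
    · subst hb1; subst hb2
      refine ⟨x ++ ⟨v, r⟩ :: b', u, y₂, by simp, ?_⟩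
      intro l hl
      simp only [List.mem_append, List.mem_cons] at hl
      rcases hl with h1 | h1 | h1
      · exact hx₂ l (by simp [h1])
      · rw [h1]; exact hadj
      · exact hx₂ l (by simp [h1])
    · cases c₂ with
      | nil =>
        simp only [List.append_nil] at hd1
        simp only [List.nil_append] at hd2
        subst hd1
        refine ⟨x ++ [⟨v, r⟩], u, y₂, by simp [← hd2], ?_⟩
        intro l hl
        simp only [List.mem_append, List.mem_singleton] at hl
        rcases hl with h1 | h1
        · exact hx₂ l (by simp [h1])
        · rw [h1]; exact hadj
      | cons hd tl =>
        exfalso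
        rw [List.cons_append] at hd2
        injection hd2 with e1 e2
        have hmem : hd ∈ M := by rw [hd1]; simp
        have := hM hd hmem
        rw [← e1] at this
        exact hadj.ne' this
  · cases c' with
    | nil =>
      simp only [List.append_nil] at hc1
      simp only [List.nil_append] at hc2
      cases M with
      | nil =>
        simp only [List.nil_append] at hc2
        refine ⟨x ++ [⟨v, r⟩], u, y₂, by rw [← hc2]; simp, ?_⟩
        intro l hl
        simp only [List.mem_append, List.mem_singleton] at hl
        rcases hl with h1 | h1
        · exact hx₂ l (by rw [← hc1]; exact h1)
        · rw [h1]; exact hadj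
      | cons hd tl =>
        exfalso
        rw [List.cons_append] at hc2
        injection hc2 with e1 e2
        have := hM hd (by simp)
        rw [← e1] at this
        exact hadj.ne' this
    | cons hd tl =>
      rw [List.cons_append] at hc2
      injection hc2 with e1 e2
      subst hc1
      obtain rfl : hd = ⟨w, u⟩ := e1.symm
      exact ⟨x₂, u, tl ++ ⟨v, r⟩ :: y, by simp, hx₂⟩

theorem hasFront_cons_of {v : V} {hd : (v : V) × S v} {ω : Wd S} (hadj : G.Adj hd.1 v)
    (hf : HasFront G v ω) : HasFront G v (hd :: ω) := by
  obtain ⟨x, t, y, rfl, hx⟩ := hf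
  refine ⟨hd :: x, t, y, by simp, ?_⟩
  intro l hl
  rcases List.mem_cons.1 hl with h1 | h1
  · rw [h1]; exact hadj
  · exact hx l h1

theorem hasFront_of_cons {v : V} {hd : (v : V) × S v} {ω : Wd S} (hne : hd.1 ≠ v)
    (hf : HasFront G v (hd :: ω)) : HasFront G v ω := by
  obtain ⟨x, t, y, heq, hx⟩ := hf
  cases x with
  | nil =>
    simp only [List.nil_append] at heq
    injection heq with e1 e2
    exact absurd (congrArg Sigma.fst e1) hne
  | cons hd₂ tl =>
    rw [List.cons_append] at heq
    injection heq with e1 e2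
    exact ⟨tl, t, y, e2, fun l hl => hx l (by simp [hl])⟩


theorem hasFront_swap {v : V} {w w' : Wd S} (hsw : Swap G w w') (hf : HasFront G v w) :
    HasFront G v w' := by
  obtain ⟨D, E, a, b, hab⟩ := hsw
  obtain ⟨x, t, y, heq, hx⟩ := hf
  rcases split_tri D x a ⟨v, t⟩ (b :: E) y heq with
    ⟨e1, e2, e3⟩ | ⟨m, hm1, hm2⟩ | ⟨m, hm1, hm2⟩
  · -- a = ⟨v,t⟩ at swap position
    subst e1
    refine ⟨D ++ [b], t, E, ?_, ?_⟩
    · rw [← e2]; simp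
    · intro l hl
      simp only [List.mem_append, List.mem_singleton] at hl
      rcases hl with h1 | h1
      · exact hx l h1
      · subst h1
        rw [e2] at hab
        exact hab.symm
  · -- front beyond position of a
    cases m with
    | nil =>
      rw [List.nil_append] at hm2
      injection hm2 with f1 f2
      subst hm1
      refine ⟨D, t, a :: E, ?_, fun l hl => hx l (by simp [hl])⟩
      rw [← f1, f2]
    | cons hd tl =>
      injection hm2 with f1 f2
      subst hm1; subst f1
      refine ⟨D ++ b :: a :: tl, t, y, by simp [f2], ?_⟩
      intro l hl
      refine hx l ?_
      simp only [List.mem_append, List.mem_cons] at hl ⊢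
      tauto
  · -- front inside D
    subst hm1; subst hm2
    exact ⟨x, t, m ++ b :: a :: E, by simp, hx⟩

theorem act_swap {v : V} (s : S v) {w w' : Wd S} (hsw : Swap G w w') :
    SwEq G (actW G v s w) (actW G v s w') := by
  by_cases hs : s = 1
  · subst hs; rw [actW_one, actW_one]; exact SwEq.single G hsw
  by_cases hf : HasFront G v w
  swap
  · have hf' : ¬ HasFront G v w' := fun h => hf (hasFront_swap G (Swap.symm' G hsw) h)
    rw [actW_not_front G hs hf, actW_not_front G hs hf']
    exact SwEq.cons G _ (SwEq.single G hsw)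
  obtain ⟨D, E, a, b, hab⟩ := hsw
  obtain ⟨x, t, y, heq, hx⟩ := hf
  rcases split_tri D x a ⟨v, t⟩ (b :: E) y heq with
    ⟨e1, e2, e3⟩ | ⟨m, hm1, hm2⟩ | ⟨m, hm1, hm2⟩
  · subst e1; subst e3
    have hbv : G.Adj b.1 v := by rw [e2] at hab; exact hab.symm
    have hx' : ∀ l ∈ D ++ [b], G.Adj l.1 v := by
      intro l hl
      simp only [List.mem_append, List.mem_singleton] at hl
      rcases hl with h1 | h1
      · exact hx l h1
      · rw [h1]; exact hbv
    rw [actW_front G hs heq.symm.symm hx,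
        actW_front G hs (show D ++ b :: a :: E = (D ++ [b]) ++ ⟨v, t⟩ :: E by rw [← e2]; simp) hx']
    by_cases h1 : s * t = 1
    · rw [if_pos h1, if_pos h1]; simp [SwEq.refl]
    · rw [if_neg h1, if_neg h1]
      have : G.Adj (⟨v, s * t⟩ : (v : V) × S v).1 b.1 := by rw [e2] at hab; exact hab
      have hswap := Swap.mk (G := G) D E ⟨v, s * t⟩ b this
      refine SwEq.trans G (SwEq.single G hswap) ?_
      simp [SwEq.refl]
  · cases m with
    | nil =>
      rw [List.nil_append] at hm2
      injection hm2 with f1 f2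
      subst hm1; subst f2
      have hx' : ∀ l ∈ D, G.Adj l.1 v := fun l hl => hx l (by simp [hl])
      rw [actW_front G hs (show D ++ a :: b :: E = (D ++ [a]) ++ ⟨v, t⟩ :: E by simp [f1]) hx,
          actW_front G hs (show D ++ b :: a :: E = D ++ ⟨v, t⟩ :: (a :: E) by simp [f1]) hx']
      by_cases h1 : s * t = 1
      · rw [if_pos h1, if_pos h1]; simp [SwEq.refl]
      · rw [if_neg h1, if_neg h1]
        have hadj2 : G.Adj a.1 (⟨v, s * t⟩ : (v : V) × S v).1 := by
          rw [f1] at hab; exact hab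
        have hswap := Swap.mk (G := G) D E a ⟨v, s * t⟩ hadj2
        refine SwEq.trans G ?_ (SwEq.single G hswap)
        simp [SwEq.refl]
    | cons hd tl =>
      injection hm2 with f1 f2
      subst hm1; subst f1
      have hx' : ∀ l ∈ D ++ b :: a :: tl, G.Adj l.1 v := by
        intro l hl
        refine hx l ?_
        simp only [List.mem_append, List.mem_cons] at hl ⊢
        tauto
      rw [actW_front G hs (show D ++ a :: b :: E = (D ++ a :: b :: tl) ++ ⟨v, t⟩ :: y by
            rw [f2]; simp) hx,
          actW_front G hs (show D ++ b :: a :: E = (D ++ b :: a :: tl) ++ ⟨v, t⟩ :: y by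
            rw [f2]; simp) hx']
      by_cases h1 : s * t = 1
      · rw [if_pos h1, if_pos h1]
        have hswap := Swap.mk (G := G) D (tl ++ y) a b hab
        refine SwEq.trans G (SwEq.single G ?_) (SwEq.refl G _)
        simpa using hswap
      · rw [if_neg h1, if_neg h1]
        have hswap := Swap.mk (G := G) D (tl ++ ⟨v, s * t⟩ :: y) a b hab
        refine SwEq.trans G (SwEq.single G ?_) (SwEq.refl G _)
        simpa using hswap
  · subst hm1; subst hm2
    have heq1 : x ++ ⟨v, t⟩ :: m ++ a :: b :: E = x ++ ⟨v, t⟩ :: (m ++ a :: b :: E) := by simp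
    rw [actW_front G hs (show (x ++ ⟨v, t⟩ :: m) ++ a :: b :: E = x ++ ⟨v, t⟩ :: (m ++ a :: b :: E)
          by simp) hx,
        actW_front G hs (show (x ++ ⟨v, t⟩ :: m) ++ b :: a :: E = x ++ ⟨v, t⟩ :: (m ++ b :: a :: E)
          by simp) hx]
    by_cases h1 : s * t = 1
    · rw [if_pos h1, if_pos h1]
      have hswap := Swap.mk (G := G) (x ++ m) E a b hab
      refine SwEq.single G ?_
      simpa using hswap
    · rw [if_neg h1, if_neg h1]
      have hswap := Swap.mk (G := G) (x ++ ⟨v, s * t⟩ :: m) E a b hab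
      refine SwEq.single G ?_
      simpa using hswap

theorem act_mul {v : V} (s s' : S v) {w : Wd S} (hred : Red G w) :
    SwEq G (actW G v (s * s') w) (actW G v s (actW G v s' w)) := by
  by_cases hs' : s' = 1
  · subst hs'; rw [mul_one, actW_one]; exact SwEq.refl G _
  by_cases hf : HasFront G v w
  · obtain ⟨x, t, y, heq, hx⟩ := hf
    have ht : t ≠ 1 := by
      have : (⟨v, t⟩ : (v : V) × S v) ∈ w := by rw [heq]; simp
      exact hred.1 _ this
    rw [actW_front G hs' heq hx]
    by_cases h1 : s' * t = 1
    · rw [if_pos h1]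
      have hredw : Red G (x ++ ⟨v, t⟩ :: y) := by rwa [heq] at hred
      have hnf2 : ¬ HasFront G v (x ++ y) := notFront_delete G hredw hx
      by_cases hs : s = 1
      · subst hs; rw [one_mul, actW_one, actW_front G hs' heq hx, if_pos h1]
        exact SwEq.refl G _
      by_cases h2 : s * s' = 1
      · rw [h2, actW_one, actW_not_front G hs hnf2, heq]
        have hst : s = t := by
          calc s = s * (s' * t) := by rw [h1, mul_one]
          _ = (s * s') * t := (mul_assoc s s' t).symm
          _ = t := by rw [h2, one_mul]
        rw [hst]
        exact swEq_shuffle G ⟨v, t⟩ x y hx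
      · rw [actW_front G h2 heq hx]
        have h3 : (s * s') * t = s := by rw [mul_assoc, h1, mul_one]
        rw [if_neg (by rw [h3]; exact hs), h3, actW_not_front G hs hnf2]
        exact swEq_shuffle G ⟨v, s⟩ x y hx
    · rw [if_neg h1]
      by_cases hs : s = 1
      · subst hs; rw [one_mul, actW_one, actW_front G hs' heq hx, if_neg h1]
        exact SwEq.refl G _
      rw [actW_front G hs (rfl : x ++ ⟨v, s' * t⟩ :: y = x ++ ⟨v, s' * t⟩ :: y) hx]
      by_cases h2 : s * s' = 1
      · have h3 : s * (s' * t) = t := by rw [← mul_assoc, h2, one_mul]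
        rw [if_neg (by rw [h3]; exact ht), h3, h2, actW_one, heq]
        exact SwEq.refl G _
      · rw [actW_front G h2 heq hx, mul_assoc]
        exact SwEq.refl G _
  · rw [actW_not_front G hs' hf]
    by_cases hs : s = 1
    · subst hs; rw [one_mul, actW_one, actW_not_front G hs' hf]
      exact SwEq.refl G _
    have heq2 : (⟨v, s'⟩ : (v : V) × S v) :: w = [] ++ ⟨v, s'⟩ :: w := rfl
    rw [actW_front G hs heq2 (by simp)]
    by_cases h2 : s * s' = 1
    · rw [if_pos h2, h2, actW_one, List.nil_append]
      exact SwEq.refl G _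
    · rw [if_neg h2, actW_not_front G h2 hf, List.nil_append]
      exact SwEq.refl G _

theorem act_comm_aux1 {v w : V} (hadj : G.Adj v w) {s : S v} {t : S w} (hs : s ≠ 1) (ht : t ≠ 1)
    {ω x y : Wd S} {r : S v} (heq : ω = x ++ ⟨v, r⟩ :: y) (hx : ∀ l ∈ x, G.Adj l.1 v)
    (hfw : ¬ HasFront G w ω) :
    actW G v s (actW G w t ω) = actW G w t (actW G v s ω) := by
  rw [actW_not_front G ht hfw]
  have hx' : ∀ l ∈ (⟨w, t⟩ : (v : V) × S v) :: x, G.Adj l.1 v := by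
    intro l hl
    rcases List.mem_cons.1 hl with h1 | h1
    · rw [h1]; exact hadj.symm
    · exact hx l h1
  rw [actW_front G hs
    (show (⟨w, t⟩ : (v : V) × S v) :: ω = (⟨w, t⟩ :: x) ++ ⟨v, r⟩ :: y by rw [heq]; rfl) hx']
  rw [actW_front G hs heq hx]
  by_cases h1 : s * r = 1
  · rw [if_pos h1, if_pos h1]
    have hnf : ¬ HasFront G w (x ++ y) := by
      intro h
      apply hfw
      rw [heq]
      exact hasFront_transport G hadj (M := []) (by simp) (by simpa using h)
    rw [actW_not_front G ht hnf]
    rfl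
  · rw [if_neg h1, if_neg h1]
    have hnf : ¬ HasFront G w (x ++ ⟨v, s * r⟩ :: y) := by
      intro h
      apply hfw
      rw [heq]
      exact hasFront_transport G hadj (M := [⟨v, s * r⟩]) (by simp) (by simpa using h)
    rw [actW_not_front G ht hnf]
    rfl

theorem act_comm_aux2 {v w : V} (hadj : G.Adj v w) {s : S v} {t : S w} (hs : s ≠ 1) (ht : t ≠ 1)
    {ω x₁ m y₂ : Wd S} {r : S v} {u : S w}
    (heq : ω = x₁ ++ ⟨v, r⟩ :: (m ++ ⟨w, u⟩ :: y₂))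
    (hx₁ : ∀ l ∈ x₁, G.Adj l.1 v)
    (hx₂ : ∀ l ∈ x₁ ++ ⟨v, r⟩ :: m, G.Adj l.1 w) :
    actW G v s (actW G w t ω) = actW G w t (actW G v s ω) := by
  have heqw : ω = (x₁ ++ ⟨v, r⟩ :: m) ++ ⟨w, u⟩ :: y₂ := by rw [heq]; simp
  have hxm : ∀ l ∈ x₁ ++ m, G.Adj l.1 w := by
    intro l hl
    refine hx₂ l ?_
    simp only [List.mem_append, List.mem_cons] at hl ⊢
    tauto
  have hx₂' : ∀ l ∈ x₁ ++ ⟨v, s * r⟩ :: m, G.Adj l.1 w := by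
    intro l hl
    simp only [List.mem_append, List.mem_cons] at hl
    rcases hl with h | h | h
    · exact hx₂ l (by simp [h])
    · rw [h]; exact hadj
    · exact hx₂ l (by simp [h])
  rw [actW_front G ht heqw hx₂, actW_front G hs heq hx₁]
  by_cases h1 : s * r = 1 <;> by_cases h2 : t * u = 1
  · rw [if_pos h1, if_pos h2,
      actW_front G hs (show (x₁ ++ ⟨v, r⟩ :: m) ++ y₂ = x₁ ++ ⟨v, r⟩ :: (m ++ y₂) by simp) hx₁,
      actW_front G ht (show x₁ ++ (m ++ ⟨w, u⟩ :: y₂) = (x₁ ++ m) ++ ⟨w, u⟩ :: y₂ by simp) hxm,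
      if_pos h1, if_pos h2]
    simp
  · rw [if_pos h1, if_neg h2,
      actW_front G hs (show (x₁ ++ ⟨v, r⟩ :: m) ++ ⟨w, t * u⟩ :: y₂ =
        x₁ ++ ⟨v, r⟩ :: (m ++ ⟨w, t * u⟩ :: y₂) by simp) hx₁,
      actW_front G ht (show x₁ ++ (m ++ ⟨w, u⟩ :: y₂) = (x₁ ++ m) ++ ⟨w, u⟩ :: y₂ by simp) hxm,
      if_pos h1, if_neg h2]
    simp
  · rw [if_neg h1, if_pos h2,
      actW_front G hs (show (x₁ ++ ⟨v, r⟩ :: m) ++ y₂ = x₁ ++ ⟨v, r⟩ :: (m ++ y₂) by simp) hx₁,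
      actW_front G ht (show x₁ ++ ⟨v, s * r⟩ :: (m ++ ⟨w, u⟩ :: y₂) =
        (x₁ ++ ⟨v, s * r⟩ :: m) ++ ⟨w, u⟩ :: y₂ by simp) hx₂',
      if_neg h1, if_pos h2]
    simp
  · rw [if_neg h1, if_neg h2,
      actW_front G hs (show (x₁ ++ ⟨v, r⟩ :: m) ++ ⟨w, t * u⟩ :: y₂ =
        x₁ ++ ⟨v, r⟩ :: (m ++ ⟨w, t * u⟩ :: y₂) by simp) hx₁,
      actW_front G ht (show x₁ ++ ⟨v, s * r⟩ :: (m ++ ⟨w, u⟩ :: y₂) =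
        (x₁ ++ ⟨v, s * r⟩ :: m) ++ ⟨w, u⟩ :: y₂ by simp) hx₂',
      if_neg h1, if_neg h2]
    simp

theorem act_comm {v w : V} (hadj : G.Adj v w) (s : S v) (t : S w) {ω : Wd S} :
    SwEq G (actW G v s (actW G w t ω)) (actW G w t (actW G v s ω)) := by
  by_cases hs : s = 1
  · subst hs; rw [actW_one, actW_one]; exact SwEq.refl G _
  by_cases ht : t = 1
  · subst ht; rw [actW_one, actW_one]; exact SwEq.refl G _
  by_cases hfv : HasFront G v ω <;> by_cases hfw : HasFront G w ω
  · obtain ⟨x₁, r, y₁, heqv, hx₁⟩ := hfv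
    obtain ⟨x₂, u, y₂, heqw, hx₂⟩ := hfw
    rcases split_tri x₁ x₂ ⟨v, r⟩ ⟨w, u⟩ y₁ y₂ (heqv.symm.trans heqw) with
      ⟨e1, e2, e3⟩ | ⟨m, hm1, hm2⟩ | ⟨m, hm1, hm2⟩
    · exact absurd (congrArg Sigma.fst e2) hadj.ne
    · subst hm1; subst hm2
      rw [act_comm_aux2 G hadj hs ht heqv hx₁ hx₂]
      exact SwEq.refl G _
    · subst hm1; subst hm2
      rw [act_comm_aux2 G hadj.symm ht hs heqw hx₂ hx₁]
      exact SwEq.refl G _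
  · obtain ⟨x₁, r, y₁, heqv, hx₁⟩ := hfv
    rw [act_comm_aux1 G hadj hs ht heqv hx₁ hfw]
    exact SwEq.refl G _
  · obtain ⟨x₂, u, y₂, heqw, hx₂⟩ := hfw
    rw [act_comm_aux1 G hadj.symm ht hs heqw hx₂ hfv]
    exact SwEq.refl G _
  · rw [actW_not_front G ht hfw, actW_not_front G hs hfv]
    have hfv' : ¬ HasFront G v ((⟨w, t⟩ : (v : V) × S v) :: ω) :=
      fun h => hfv (hasFront_of_cons G hadj.ne' h)
    have hfw' : ¬ HasFront G w ((⟨v, s⟩ : (v : V) × S v) :: ω) :=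
      fun h => hfw (hasFront_of_cons G hadj.ne h)
    rw [actW_not_front G hs hfv', actW_not_front G ht hfw']
    have := Swap.mk (G := G) [] ω ⟨v, s⟩ ⟨w, t⟩ hadj
    exact SwEq.single G (by simpa using this)


end
section
variable {V : Type*} (G : SimpleGraph V) {S : V → Type*} [∀ v, Monoid (S v)]

theorem red_of_cons {l : (v : V) × S v} {w : Wd S} (h : Red G (l :: w)) : Red G w := by
  constructor
  · intro x hx; exact h.1 x (by simp [hx])
  · rintro ⟨x₁, y₁, z₁, p, q, heq, hpq, hy₁⟩
    exact h.2 ⟨l :: x₁, y₁, z₁, p, q, by rw [heq]; rfl, hpq, hy₁⟩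

theorem red_act {v : V} (s : S v) {w : Wd S} (hred : Red G w) : Red G (actW G v s w) := by
  by_cases hs : s = 1
  · subst hs; rwa [actW_one]
  by_cases hf : HasFront G v w
  · obtain ⟨x, t, y, heq, hx⟩ := hf
    rw [actW_front G hs heq hx]
    subst heq
    by_cases h1 : s * t = 1
    · rw [if_pos h1]; exact red_delete G hred hx
    · rw [if_neg h1]; exact red_replace G hred h1
  · rw [actW_not_front G hs hf]
    exact red_prepend G hred hf hs

theorem act_swEq {v : V} (s : S v) {w w' : Wd S} (h : SwEq G w w') :
    SwEq G (actW G v s w) (actW G v s w') := by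
  induction h with
  | refl => exact SwEq.refl G _
  | tail _ hstep ih => exact SwEq.trans G ih (act_swap G s hstep)

theorem swEq_forall {P : (v : V) × S v → Prop} {w w' : Wd S} (h : SwEq G w w')
    (hw : ∀ l ∈ w, P l) : ∀ l ∈ w', P l := by
  induction h with
  | refl => exact hw
  | tail _ hstep ih =>
    rcases hstep with ⟨x, y, a, b, _⟩
    intro l hl
    refine ih l ?_
    simp only [List.mem_append, List.mem_cons] at hl ⊢
    tauto

theorem hasFront_swEq {v : V} {w w' : Wd S} (h : SwEq G w w') (hf : HasFront G v w) :
    HasFront G v w' := by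
  induction h with
  | refl => exact hf
  | tail _ hstep ih => exact hasFront_swap G hstep ih

variable (S) in
def RW := {w : Wd S // Red G w}

variable (S) in
instance rwSetoid : Setoid (RW G S) :=
  ⟨fun a b => SwEq G a.1 b.1, fun _ => SwEq.refl G _,
   fun h => SwEq.symm G h, fun h h' => SwEq.trans G h h'⟩

variable (S) in
def X := Quotient (rwSetoid G S)

variable (S) in
noncomputable def actX (v : V) (s : S v) : X G S → X G S :=
  Quotient.map (fun w => ⟨actW G v s w.1, red_act G s w.2⟩) (fun _ _ h => act_swEq G s h)

variable (S) in
noncomputable def phi (v : V) : S v →* Function.End (X G S) where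
  toFun s := actX G S v s
  map_one' := by
    funext ω
    refine Quotient.inductionOn ω (fun w => ?_)
    refine Quotient.sound ?_
    show SwEq G (actW G v 1 w.1) w.1
    rw [actW_one]
    exact SwEq.refl G _
  map_mul' s s' := by
    funext ω
    refine Quotient.inductionOn ω (fun w => ?_)
    refine Quotient.sound ?_
    show SwEq G (actW G v (s * s') w.1) (actW G v s (actW G v s' w.1))
    exact act_mul G s s' w.2

variable (S) in
noncomputable def Phi : Monoid.CoprodI S →* Function.End (X G S) :=
  Monoid.CoprodI.lift (phi G S)

variable (S) in
theorem con_le : graphProductCon G S ≤ Con.ker (Phi G S) := by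
  refine Con.conGen_le.2 ?_
  rintro x y ⟨v, w, s, t, hadj, rfl, rfl⟩
  show Phi G S _ = Phi G S _
  simp only [map_mul, Monoid.CoprodI.lift_of, Phi]
  show (phi G S v s) * (phi G S w t) = (phi G S w t) * (phi G S v s)
  funext ω
  refine Quotient.inductionOn ω (fun d => ?_)
  refine Quotient.sound ?_
  show SwEq G (actW G v s (actW G w t d.1)) (actW G w t (actW G v s d.1))
  exact act_comm G hadj s t

variable (S) in
noncomputable def actG : GraphProduct G S →* Function.End (X G S) :=
  Con.lift _ (Phi G S) (con_le G S)

variable (S) in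
def evalW (w : Wd S) : GraphProduct G S :=
  (w.map (fun l => GraphProduct.mk G S (Monoid.CoprodI.of l.2))).prod

theorem evalW_nil : evalW G S ([] : Wd S) = 1 := rfl

theorem evalW_cons (l : (v : V) × S v) (w : Wd S) :
    evalW G S (l :: w) = GraphProduct.mk G S (Monoid.CoprodI.of l.2) * evalW G S w := by
  simp [evalW]

theorem evalW_append (w w' : Wd S) : evalW G S (w ++ w') = evalW G S w * evalW G S w' := by
  simp [evalW]

theorem mk_comm {v w : V} (hadj : G.Adj v w) (s : S v) (t : S w) :
    GraphProduct.mk G S (Monoid.CoprodI.of s) * GraphProduct.mk G S (Monoid.CoprodI.of t) =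
    GraphProduct.mk G S (Monoid.CoprodI.of t) * GraphProduct.mk G S (Monoid.CoprodI.of s) := by
  have h : (graphProductCon G S) (Monoid.CoprodI.of s * Monoid.CoprodI.of t)
      (Monoid.CoprodI.of t * Monoid.CoprodI.of s) :=
    ConGen.Rel.of _ _ ⟨v, w, s, t, hadj, rfl, rfl⟩
  have h2 := (Con.eq _).2 h
  calc GraphProduct.mk G S (Monoid.CoprodI.of s) * GraphProduct.mk G S (Monoid.CoprodI.of t)
      = GraphProduct.mk G S (Monoid.CoprodI.of s * Monoid.CoprodI.of t) := (map_mul _ _ _).symm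
    _ = GraphProduct.mk G S (Monoid.CoprodI.of t * Monoid.CoprodI.of s) := h2
    _ = _ := map_mul _ _ _

theorem eval_swap {w w' : Wd S} (h : Swap G w w') : evalW G S w = evalW G S w' := by
  rcases h with ⟨x, y, a, b, hab⟩
  simp only [evalW_append, evalW_cons]
  rw [← mul_assoc (GraphProduct.mk G S (Monoid.CoprodI.of a.2)), mk_comm G hab, mul_assoc]

theorem eval_swEq {w w' : Wd S} (h : SwEq G w w') : evalW G S w = evalW G S w' := by
  induction h with
  | refl => rfl
  | tail _ hstep ih => exact ih.trans (eval_swap G hstep)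

variable (S) in
noncomputable def evalX : X G S → GraphProduct G S :=
  Quotient.lift (fun w : RW G S => evalW G S w.1) (fun _ _ h => eval_swEq G h)

theorem eval_front : ∀ (x : Wd S) {v : V} (t : S v) (y : Wd S), (∀ l ∈ x, G.Adj l.1 v) →
    evalW G S (x ++ ⟨v, t⟩ :: y) =
      GraphProduct.mk G S (Monoid.CoprodI.of t) * evalW G S (x ++ y) := by
  intro x
  induction x with
  | nil => intro v t y _; simp [evalW_cons]
  | cons a x' ih =>
    intro v t y hx
    have ha : G.Adj a.1 v := hx a (by simp)
    rw [List.cons_append, evalW_cons, ih t y (fun l hl => hx l (by simp [hl])),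
      ← mul_assoc, mk_comm G ha, mul_assoc, ← evalW_cons, List.cons_append]

theorem evalX_act {v : V} (s : S v) (ω : X G S) :
    evalX G S (actX G S v s ω) = GraphProduct.mk G S (Monoid.CoprodI.of s) * evalX G S ω := by
  refine Quotient.inductionOn ω (fun d => ?_)
  show evalX G S (Quotient.map _ _ _) = _
  show evalW G S (actW G v s d.1) = _ * evalW G S d.1
  by_cases hs : s = 1
  · subst hs; rw [actW_one]; simp
  by_cases hf : HasFront G v d.1
  · obtain ⟨x, t, y, heq, hx⟩ := hf
    rw [actW_front G hs heq hx, heq, eval_front G x t y hx]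
    by_cases h1 : s * t = 1
    · rw [if_pos h1, ← mul_assoc, ← map_mul, ← map_mul, h1]
      simp
    · rw [if_neg h1, eval_front G x (s * t) y hx, ← mul_assoc, ← map_mul, ← map_mul]
  · rw [actW_not_front G hs hf, evalW_cons]

theorem evalX_actG (g : GraphProduct G S) (ω : X G S) :
    evalX G S (actG G S g ω) = g * evalX G S ω := by
  obtain ⟨m, rfl⟩ := Con.mk'_surjective (c := graphProductCon G S) g
  induction m using Monoid.CoprodI.induction_on generalizing ω with
  | one =>
    rw [map_one ((graphProductCon G S).mk')]
    erw [map_one (actG G S)]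
    exact (one_mul (evalX G S ω)).symm
  | of i m =>
    have key : actG G S ((graphProductCon G S).mk' (Monoid.CoprodI.of m)) = actX G S i m := by
      have h1 := Con.lift_mk' (con_le G S) (Monoid.CoprodI.of m)
      have h2 : actG G S ((graphProductCon G S).mk' (Monoid.CoprodI.of m)) =
          Phi G S (Monoid.CoprodI.of m) := h1
      rw [h2]
      show Monoid.CoprodI.lift (phi G S) (Monoid.CoprodI.of m) = _
      rw [Monoid.CoprodI.lift_of]
      rfl
    rw [key, evalX_act]
    rfl
  | mul x y ihx ihy =>
    rw [map_mul ((graphProductCon G S).mk')]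
    erw [map_mul (actG G S)]
    show evalX G S ((actG G S ((graphProductCon G S).mk' x))
      ((actG G S ((graphProductCon G S).mk' y)) ω)) = _
    rw [ihx, ihy]
    exact (mul_assoc _ _ _).symm

theorem actG_of {v : V} (s : S v) :
    actG G S (GraphProduct.mk G S (Monoid.CoprodI.of s)) = actX G S v s := by
  have h2 : actG G S (GraphProduct.mk G S (Monoid.CoprodI.of s)) =
      Phi G S (Monoid.CoprodI.of s) := Con.lift_mk' (con_le G S) (Monoid.CoprodI.of s)
  rw [h2]
  show Monoid.CoprodI.lift (phi G S) (Monoid.CoprodI.of s) = _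
  rw [Monoid.CoprodI.lift_of]
  rfl

variable (S) in
def emptyX : X G S := ⟦⟨[], red_nil G⟩⟧

variable (S) in
noncomputable def nfX (g : GraphProduct G S) : X G S := actG G S g (emptyX G S)

theorem evalX_nfX (g : GraphProduct G S) : evalX G S (nfX G S g) = g := by
  rw [nfX, evalX_actG]
  show g * evalW G S [] = g
  rw [evalW_nil, mul_one]

theorem actG_eval_red {w : Wd S} (hred : Red G w) :
    actG G S (evalW G S w) (emptyX G S) = ⟦⟨w, hred⟩⟧ := by
  induction w with
  | nil => rw [evalW_nil, map_one]; rfl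
  | cons l w' ihw =>
    have hred' : Red G w' := red_of_cons G hred
    rw [evalW_cons, map_mul]
    show actG G S (GraphProduct.mk G S (Monoid.CoprodI.of l.2))
      (actG G S (evalW G S w') (emptyX G S)) = _
    rw [ihw hred', actG_of]
    refine Quotient.sound ?_
    show SwEq G (actW G l.1 l.2 w') (l :: w')
    have hnf : ¬ HasFront G l.1 w' := notFront_cons_of_red G hred
    rw [actW_not_front G (hred.1 l (by simp)) hnf]
    exact SwEq.refl G _

theorem swEq_of_eval_eq {w w' : Wd S} (h : Red G w) (h' : Red G w')
    (he : evalW G S w = evalW G S w') : SwEq G w w' := by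
  have h1 := actG_eval_red G h
  rw [he, actG_eval_red G h'] at h1
  exact SwEq.symm G (Quotient.exact h1)

theorem exists_red_word (g : GraphProduct G S) :
    ∃ w : Wd S, ∃ _ : Red G w, evalW G S w = g := by
  obtain ⟨d, hd⟩ := Quotient.exists_rep (nfX G S g)
  refine ⟨d.1, d.2, ?_⟩
  have h1 : evalX G S ⟦d⟧ = evalW G S d.1 := rfl
  rw [← h1, hd, evalX_nfX]

theorem isUnit_left_of_mul_cancel {M : Type*} [Monoid M] (hlc : LeftCancellative M)
    {a b : M} (h : a * b = 1) : IsUnit a := by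
  have h2 : a * (b * a) = a * 1 := by rw [← mul_assoc, h, one_mul, mul_one]
  exact ⟨⟨a, b, h, hlc a _ _ h2⟩, rfl⟩

theorem isUnit_left_of_mul' {M : Type*} [Monoid M] (hlc : LeftCancellative M) {a b : M}
    (h : IsUnit (a * b)) : IsUnit a := by
  obtain ⟨u, hu⟩ := h
  have h1 : a * (b * ↑u⁻¹) = 1 := by rw [← mul_assoc, ← hu, Units.mul_inv]
  exact isUnit_left_of_mul_cancel hlc h1

theorem isUnit_right_of_mul {M : Type*} [Monoid M] {a b : M} (h : IsUnit (a * b))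
    (ha : IsUnit a) : IsUnit b := by
  obtain ⟨u, rfl⟩ := ha
  have h1 : b = ↑u⁻¹ * (↑u * b) := (Units.inv_mul_cancel_left u b).symm
  rw [h1]
  exact (Units.isUnit _).mul h

theorem isUnit_evalW {w : Wd S} (hunit : ∀ l ∈ w, IsUnit l.2) : IsUnit (evalW G S w) := by
  induction w with
  | nil => exact isUnit_one
  | cons l w' ihw =>
    rw [evalW_cons]
    exact (((hunit l (by simp)).map Monoid.CoprodI.of).map (GraphProduct.mk G S)).mul
      (ihw fun a ha => hunit a (by simp [ha]))

theorem units_of_act (hlc : ∀ v, LeftCancellative (S v)) :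
    ∀ (w : Wd S), Red G w → ∀ (σ τ : RW G S),
      actG G S (evalW G S w) ⟦σ⟧ = ⟦τ⟧ → (∀ l ∈ τ.1, IsUnit l.2) →
      (∀ l ∈ w, IsUnit l.2) ∧ (∀ l ∈ σ.1, IsUnit l.2) := by
  intro w
  induction w with
  | nil =>
    intro _ σ τ heq hτ
    refine ⟨by simp, ?_⟩
    rw [evalW_nil, map_one] at heq
    have h1 : SwEq G σ.1 τ.1 := Quotient.exact heq
    exact swEq_forall G (SwEq.symm G h1) hτ
  | cons l w' ih =>
    intro hred σ τ heq hτ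
    have hred' := red_of_cons G hred
    rw [evalW_cons, map_mul] at heq
    obtain ⟨d, hd⟩ := Quotient.exists_rep (actG G S (evalW G S w') ⟦σ⟧)
    have heq2 : actG G S (GraphProduct.mk G S (Monoid.CoprodI.of l.2))
        (actG G S (evalW G S w') ⟦σ⟧) = ⟦τ⟧ := heq
    rw [← hd, actG_of] at heq2
    have hau : ∀ l' ∈ actW G l.1 l.2 d.1, IsUnit l'.2 :=
      swEq_forall G (SwEq.symm G (Quotient.exact heq2)) hτ
    have hl1 : IsUnit l.2 ∧ ∀ a ∈ d.1, IsUnit a.2 := by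
      by_cases hs : l.2 = 1
      · rw [hs, actW_one] at hau
        exact ⟨hs ▸ isUnit_one, hau⟩
      by_cases hf : HasFront G l.1 d.1
      · obtain ⟨x, t, y, heqd, hx⟩ := hf
        rw [actW_front G hs heqd hx] at hau
        by_cases h1 : l.2 * t = 1
        · rw [if_pos h1] at hau
          have hu : IsUnit l.2 := isUnit_left_of_mul_cancel (hlc l.1) h1
          have ht : IsUnit t := isUnit_right_of_mul
            (show IsUnit (l.2 * t) by rw [h1]; exact isUnit_one) hu
          refine ⟨hu, ?_⟩
          intro a ha
          rw [heqd] at ha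
          simp only [List.mem_append, List.mem_cons] at ha
          rcases ha with h | h | h
          · exact hau a (by simp [h])
          · rw [h]; exact ht
          · exact hau a (by simp [h])
        · rw [if_neg h1] at hau
          have hst : IsUnit (l.2 * t) := hau ⟨l.1, l.2 * t⟩ (by simp)
          have hu : IsUnit l.2 := isUnit_left_of_mul' (hlc l.1) hst
          have ht : IsUnit t := isUnit_right_of_mul hst hu
          refine ⟨hu, ?_⟩
          intro a ha
          rw [heqd] at ha
          simp only [List.mem_append, List.mem_cons] at ha
          rcases ha with h | h | h
          · exact hau a (by simp [h])
          · rw [h]; exact ht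
          · exact hau a (by simp [h])
      · rw [actW_not_front G hs hf] at hau
        exact ⟨hau ⟨l.1, l.2⟩ (by simp), fun a ha => hau a (by simp [ha])⟩
    obtain ⟨hw', hσ⟩ := ih hred' σ d hd.symm hl1.2
    refine ⟨?_, hσ⟩
    intro a ha
    rcases List.mem_cons.1 ha with h | h
    · rw [h]; exact hl1.1
    · exact hw' a h

theorem isUnit_iff_exists (hlc : ∀ v, LeftCancellative (S v)) (g : GraphProduct G S) :
    IsUnit g ↔ ∃ w : Wd S, Red G w ∧ (∀ l ∈ w, IsUnit l.2) ∧ evalW G S w = g := by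
  constructor
  · rintro ⟨u, rfl⟩
    obtain ⟨a, hreda, ha⟩ := exists_red_word G ((u : (GraphProduct G S)ˣ) : GraphProduct G S)
    obtain ⟨b, hredb, hb⟩ := exists_red_word G ((↑u⁻¹ : GraphProduct G S))
    have h1 : actG G S (evalW G S a) ⟦(⟨b, hredb⟩ : RW G S)⟧ =
        ⟦(⟨[], red_nil G⟩ : RW G S)⟧ := by
      have e1 : (⟦(⟨b, hredb⟩ : RW G S)⟧ : X G S) = actG G S (↑u⁻¹) (emptyX G S) := by
        rw [← hb]; exact (actG_eval_red G hredb).symm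
      rw [e1, ha]
      have e2 : actG G S (↑u) (actG G S (↑u⁻¹) (emptyX G S)) =
          actG G S ((↑u : GraphProduct G S) * ↑u⁻¹) (emptyX G S) := by
        rw [map_mul]; rfl
      rw [e2, Units.mul_inv, map_one]
      rfl
    have h2 := units_of_act G hlc a hreda ⟨b, hredb⟩ ⟨[], red_nil G⟩ h1 (by simp)
    exact ⟨a, hreda, h2.1, ha⟩
  · rintro ⟨w, _, hunit, rfl⟩
    exact isUnit_evalW G hunit

variable (S) in
def XFront (v : V) : X G S → Prop :=
  Quotient.lift (fun w : RW G S => HasFront G v w.1)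
    (fun _ _ h => propext ⟨fun hf => hasFront_swEq G h hf,
      fun hf => hasFront_swEq G (SwEq.symm G h) hf⟩)

theorem xfront_act {v : V} (hlc : LeftCancellative (S v)) {s : S v} (hs : ¬ IsUnit s)
    (ω : X G S) : XFront G S v (actX G S v s ω) := by
  refine Quotient.inductionOn ω (fun d => ?_)
  have hs1 : s ≠ 1 := fun h => hs (h ▸ isUnit_one)
  show HasFront G v (actW G v s d.1)
  by_cases hf : HasFront G v d.1
  · obtain ⟨x, t, y, heq, hx⟩ := hf
    rw [actW_front G hs1 heq hx]
    have h1 : s * t ≠ 1 := fun h => hs (isUnit_left_of_mul_cancel hlc h)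
    rw [if_neg h1]
    exact ⟨x, s * t, y, rfl, hx⟩
  · rw [actW_not_front G hs1 hf]
    exact ⟨[], s, d.1, rfl, by simp⟩

theorem xfront_not {v w : V} (hvw : v ≠ w) (hadj : ¬ G.Adj v w) (ω : X G S) :
    XFront G S v ω → ¬ XFront G S w ω := by
  refine Quotient.inductionOn ω (fun d => ?_)
  exact fun h h' => not_front_of_front G hvw hadj h h'

theorem xfront_prepend {w' : V} {t : S w'} (ht : t ≠ 1) (ω : X G S) :
    ¬ XFront G S w' ω → XFront G S w' (actX G S w' t ω) := by
  refine Quotient.inductionOn ω (fun d => ?_)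
  intro h
  show HasFront G w' (actW G w' t d.1)
  rw [actW_not_front G ht h]
  exact ⟨[], t, d.1, rfl, by simp⟩

theorem exists_nonunit_split (w : Wd S) : (∀ l ∈ w, IsUnit l.2) ∨
    ∃ (u : Wd S) (v : V) (s : S v) (w₂ : Wd S),
      w = u ++ ⟨v, s⟩ :: w₂ ∧ (∀ l ∈ u, IsUnit l.2) ∧ ¬ IsUnit s := by
  induction w with
  | nil => left; simp
  | cons l w' ih =>
    by_cases hl : IsUnit l.2
    · rcases ih with h | ⟨u, v, s, w₂, rfl, hu, hs⟩
      · left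
        intro a ha
        rcases List.mem_cons.1 ha with h1 | h1
        · rw [h1]; exact hl
        · exact h a h1
      · right
        refine ⟨l :: u, v, s, w₂, rfl, ?_, hs⟩
        intro a ha
        rcases List.mem_cons.1 ha with h1 | h1
        · rw [h1]; exact hl
        · exact hu a h1
    · right
      exact ⟨[], l.1, l.2, w', by simp, by simp, hl⟩

theorem exists_compl_adj [Nontrivial V] (hcc : Gᶜ.Connected) (v : V) :
    ∃ w, v ≠ w ∧ ¬ G.Adj v w := by
  obtain ⟨u, hu⟩ := exists_ne v
  obtain ⟨p⟩ := hcc.preconnected v u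
  cases p with
  | nil => exact absurd rfl hu.symm
  | cons h q =>
    rw [SimpleGraph.compl_adj] at h
    exact ⟨_, h.1, h.2⟩


variable (S) in
noncomputable def uF (v : V) : (S v)ˣ →* (GraphProduct G S)ˣ :=
  Units.map ((GraphProduct.mk G S).comp (Monoid.CoprodI.of : S v →* Monoid.CoprodI S))

theorem uF_coe {v : V} (u : (S v)ˣ) :
    ((uF G S v u : (GraphProduct G S)ˣ) : GraphProduct G S) =
      GraphProduct.mk G S (Monoid.CoprodI.of (u : S v)) := rfl

variable (S) in
theorem conU_le : graphProductCon G (fun v => (S v)ˣ) ≤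
    Con.ker (Monoid.CoprodI.lift (uF G S)) := by
  refine Con.conGen_le.2 ?_
  rintro x y ⟨v, w, s, t, hadj, rfl, rfl⟩
  show Monoid.CoprodI.lift (uF G S) _ = Monoid.CoprodI.lift (uF G S) _
  rw [map_mul, map_mul, Monoid.CoprodI.lift_of, Monoid.CoprodI.lift_of]
  apply Units.ext
  rw [Units.val_mul, Units.val_mul]
  exact mk_comm G hadj s.val t.val

variable (S) in
noncomputable def phiU : GraphProduct G (fun v => (S v)ˣ) →* (GraphProduct G S)ˣ :=
  Con.lift _ (Monoid.CoprodI.lift (uF G S)) (conU_le G S)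

theorem phiU_mk_of {v : V} (u : (S v)ˣ) :
    phiU G S (GraphProduct.mk G (fun v => (S v)ˣ) (Monoid.CoprodI.of u)) = uF G S v u := by
  have h2 : phiU G S (GraphProduct.mk G (fun v => (S v)ˣ) (Monoid.CoprodI.of u)) =
      Monoid.CoprodI.lift (uF G S) (Monoid.CoprodI.of u) :=
    Con.lift_mk' (conU_le G S) (Monoid.CoprodI.of u)
  rw [h2, Monoid.CoprodI.lift_of]

variable (S) in
def mapW (w : Wd (fun v => (S v)ˣ)) : Wd S :=
  w.map (fun l => ⟨l.1, (l.2 : S l.1)⟩)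

theorem phiU_evalW (w : Wd (fun v => (S v)ˣ)) :
    ((phiU G S (evalW G (fun v => (S v)ˣ) w) : (GraphProduct G S)ˣ) : GraphProduct G S) =
      evalW G S (mapW S w) := by
  induction w with
  | nil =>
    rw [show evalW G (fun v => (S v)ˣ) [] = 1 from rfl, map_one]
    rfl
  | cons l w' ih =>
    rw [evalW_cons, map_mul, Units.val_mul, ih, phiU_mk_of]
    rw [show mapW S (l :: w') = ⟨l.1, (l.2 : S l.1)⟩ :: mapW S w' from rfl, evalW_cons]
    rw [uF_coe]

theorem red_mapW {w : Wd (fun v => (S v)ˣ)} (h : Red G w) : Red G (mapW S w) := by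
  constructor
  · intro l hl
    rw [mapW, List.mem_map] at hl
    obtain ⟨a, ha, rfl⟩ := hl
    intro h1
    exact h.1 a ha (Units.ext h1)
  · rintro ⟨x, y, z, p, q, heq, hpq, hy⟩
    rw [mapW, List.map_eq_append_iff] at heq
    obtain ⟨x', r1, rfl, hx', hr1⟩ := heq
    rw [List.map_eq_cons_iff] at hr1
    obtain ⟨p', r2, hr2, hp', hr3⟩ := hr1
    rw [List.map_eq_append_iff] at hr3
    obtain ⟨y', r4, hr4, hy', hr5⟩ := hr3
    rw [List.map_eq_cons_iff] at hr5
    obtain ⟨q', z', hr6, hq', hz'⟩ := hr5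
    have ep : p'.1 = p.1 := by rw [← hp']
    have eq' : q'.1 = q.1 := by rw [← hq']
    refine h.2 ⟨x', y', z', p', q', ?_, ?_, ?_⟩
    · rw [hr2, hr4, hr6]
    · rw [ep, eq']; exact hpq
    · intro l hl
      have hmem : (⟨l.1, (l.2 : S l.1)⟩ : (v : V) × S v) ∈ y := by
        rw [← hy']; exact List.mem_map_of_mem hl
      have h3 := hy _ hmem
      rw [ep]
      exact h3

theorem mapW_injective : Function.Injective (mapW S) := by
  have hinj : Function.Injective
      (fun l : (v : V) × (S v)ˣ => (⟨l.1, (l.2 : S l.1)⟩ : (v : V) × S v)) := by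
    rintro ⟨v, u⟩ ⟨v', u'⟩ h
    dsimp only at h
    obtain ⟨rfl, h2⟩ := Sigma.mk.inj_iff.1 h
    exact congrArg (Sigma.mk v) (Units.ext (eq_of_heq h2))
  intro a b h
  exact List.map_injective_iff.2 hinj h

theorem swap_inv {w c : Wd S} (h : Swap G w c) :
    ∃ x y p q, w = x ++ p :: q :: y ∧ c = x ++ q :: p :: y ∧ G.Adj p.1 q.1 := by
  rcases h with ⟨x, y, p, q, h⟩
  exact ⟨x, y, p, q, rfl, rfl, h⟩

theorem swEq_pullback {a : Wd (fun v => (S v)ˣ)} {c : Wd S}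
    (h : SwEq G (mapW S a) c) : ∃ a', mapW S a' = c ∧ SwEq G a a' := by
  induction h with
  | refl => exact ⟨a, rfl, SwEq.refl G a⟩
  | tail _ hstep ih =>
    obtain ⟨a', rfl, hsw⟩ := ih
    obtain ⟨x, y, p, q, heq, rfl, hadj⟩ := swap_inv G hstep
    rw [mapW, List.map_eq_append_iff] at heq
    obtain ⟨x', r1, rfl, hx', hr1⟩ := heq
    rw [List.map_eq_cons_iff] at hr1
    obtain ⟨p', r2, hr2, hp', hr3⟩ := hr1
    rw [List.map_eq_cons_iff] at hr3
    obtain ⟨q', y', hr4, hq', hy'⟩ := hr3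
    have hadj' : G.Adj p'.1 q'.1 := by
      have ep : p'.1 = p.1 := by rw [← hp']
      have eq' : q'.1 = q.1 := by rw [← hq']
      rw [ep, eq']; exact hadj
    refine ⟨x' ++ q' :: p' :: y', ?_, ?_⟩
    · simp only [mapW, List.map_append, List.map_cons]
      rw [hp', hq', hy', hx']
    · refine SwEq.trans G hsw ?_
      rw [hr2, hr4]
      exact SwEq.single G (Swap.mk x' y' p' q' hadj')

theorem phiU_injective : Function.Injective (phiU G S) := by
  intro α β h
  obtain ⟨a, hreda, rfl⟩ := exists_red_word (S := fun v => (S v)ˣ) G α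
  obtain ⟨b, hredb, rfl⟩ := exists_red_word (S := fun v => (S v)ˣ) G β
  have he : evalW G S (mapW S a) = evalW G S (mapW S b) := by
    rw [← phiU_evalW, ← phiU_evalW, h]
  have hsw := swEq_of_eval_eq G (red_mapW G hreda) (red_mapW G hredb) he
  obtain ⟨b', hb', hsw'⟩ := swEq_pullback G hsw
  have hbb : b' = b := mapW_injective hb'
  rw [← hbb]
  exact eval_swEq G hsw'

open Classical in
variable (S) in
noncomputable def liftW (w : Wd S) : Wd (fun v => (S v)ˣ) :=
  w.map (fun l => ⟨l.1, if h : IsUnit l.2 then h.unit else 1⟩)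

open Classical in
theorem mapW_liftW {w : Wd S} (h : ∀ l ∈ w, IsUnit l.2) : mapW S (liftW S w) = w := by
  induction w with
  | nil => rfl
  | cons l w' ih =>
    have ht : mapW S (liftW S w') = w' := ih (fun a ha => h a (by simp [ha]))
    have hu : IsUnit l.2 := h l (by simp)
    show (⟨l.1, ((dite (IsUnit l.2) (fun h => h.unit) (fun _ => 1) : (S l.1)ˣ) : S l.1)⟩ :
      (v : V) × S v) :: mapW S (liftW S w') = l :: w'
    rw [dif_pos hu, hu.unit_spec, ht]

theorem phiU_surjective (hlc : ∀ v, LeftCancellative (S v)) :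
    Function.Surjective (phiU G S) := by
  intro γ
  obtain ⟨w, hred, hunits, heval⟩ := (isUnit_iff_exists G hlc _).1 (Units.isUnit γ)
  refine ⟨evalW G (fun v => (S v)ˣ) (liftW S w), ?_⟩
  apply Units.ext
  rw [phiU_evalW, mapW_liftW hunits, heval]


theorem core_eq_units [Nontrivial V] (hcc : Gᶜ.Connected) [∀ v, Nontrivial (S v)]
    (hlc : ∀ v, LeftCancellative (S v)) :
    core (GraphProduct G S) = {x : GraphProduct G S | IsUnit x} := by
  ext a
  simp only [Set.mem_setOf_eq]
  constructor
  · intro hcore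
    obtain ⟨w, hred, rfl⟩ := exists_red_word G a
    rcases exists_nonunit_split w with hall | ⟨u, v, s, w₂, rfl, hu, hs⟩
    · exact isUnit_evalW G hall
    · exfalso
      obtain ⟨w', hvw', hnadj⟩ := exists_compl_adj G hcc v
      obtain ⟨g, hg⟩ := exists_ne (1 : S w')
      have hcu : IsUnit (evalW G S u) := isUnit_evalW G hu
      refine hcore (evalW G S u * (GraphProduct.mk G S (Monoid.CoprodI.of g) *
        GraphProduct.mk G S (Monoid.CoprodI.of s))) ?_
      show pIdeal _ ∩ pIdeal _ = ∅
      rw [Set.eq_empty_iff_forall_notMem]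
      rintro z ⟨⟨x, hx⟩, ⟨y, hy⟩⟩
      have hx' : evalW G S (u ++ ⟨v, s⟩ :: w₂) * x = z := hx
      have hy' : evalW G S u * (GraphProduct.mk G S (Monoid.CoprodI.of g) *
        GraphProduct.mk G S (Monoid.CoprodI.of s)) * y = z := hy
      have hxy := hx'.trans hy'.symm
      rw [evalW_append, evalW_cons] at hxy
      simp only [mul_assoc] at hxy
      have key := hcu.mul_left_cancel hxy
      have hkey := congrArg (fun z => actG G S z (emptyX G S)) key
      have hL : actG G S (GraphProduct.mk G S (Monoid.CoprodI.of s) * (evalW G S w₂ * x))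
          (emptyX G S) = actX G S v s (actG G S (evalW G S w₂ * x) (emptyX G S)) := by
        rw [map_mul, actG_of]; rfl
      have hR : actG G S (GraphProduct.mk G S (Monoid.CoprodI.of g) *
            (GraphProduct.mk G S (Monoid.CoprodI.of s) * y)) (emptyX G S) =
          actX G S w' g (actX G S v s (actG G S y (emptyX G S))) := by
        rw [map_mul, map_mul, actG_of, actG_of]; rfl
      rw [hL, hR] at hkey
      have h1 : XFront G S v (actX G S v s (actG G S (evalW G S w₂ * x) (emptyX G S))) :=
        xfront_act G (hlc v) hs _
      have h2 : ¬ XFront G S w' (actX G S v s (actG G S (evalW G S w₂ * x) (emptyX G S))) :=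
        xfront_not G hvw' hnadj _ h1
      have h3 : XFront G S w' (actX G S w' g (actX G S v s (actG G S y (emptyX G S)))) :=
        xfront_prepend G hg _ (xfront_not G hvw' hnadj _ (xfront_act G (hlc v) hs _))
      rw [hkey] at h2
      exact h2 h3
  · rintro ⟨uu, rfl⟩
    intro t ht
    have h1 : t ∈ pIdeal ((uu : GraphProduct G S)) :=
      ⟨(↑uu⁻¹ : GraphProduct G S) * t, by
        show (↑uu : GraphProduct G S) * ((↑uu⁻¹ : GraphProduct G S) * t) = t
        rw [← mul_assoc, Units.mul_inv, one_mul]⟩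
    have h2 : t ∈ pIdeal t := ⟨1, mul_one t⟩
    have h3 := Set.eq_empty_iff_forall_notMem.1 ht t
    exact h3 ⟨h1, h2⟩

end
end GPW

/-- Theorem 3.2(i): for a coconnected graph with at least two vertices and nontrivial
right LCM vertex monoids, the unit group of the graph product is the graph product of
the unit groups, and the core of the graph product is its unit group. -/
theorem units_and_core_of_coconnected_graph_product {V : Type*} [Countable V] [Nontrivial V]
    (G : SimpleGraph V) (hcc : Gᶜ.Connected)
    (S : V → Type*) [∀ v, Monoid (S v)] [∀ v, Nontrivial (S v)]
    (hlc : ∀ v, LeftCancellative (S v)) (hlcm : ∀ v, IsRightLCM (S v)) :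
    (∃ e : GraphProduct G (fun v => (S v)ˣ) ≃* (GraphProduct G S)ˣ,
      ∀ (v : V) (u : (S v)ˣ),
        ((e (GraphProduct.mk G (fun v => (S v)ˣ) (Monoid.CoprodI.of u)) :
            (GraphProduct G S)ˣ) : GraphProduct G S) =
          GraphProduct.mk G S (Monoid.CoprodI.of (u : S v))) ∧
    core (GraphProduct G S) = {x : GraphProduct G S | IsUnit x} := by
  constructor
  · refine ⟨MulEquiv.ofBijective (GPW.phiU G S)
      ⟨GPW.phiU_injective G, GPW.phiU_surjective G hlc⟩, fun v u => ?_⟩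
    show ((GPW.phiU G S (GraphProduct.mk G (fun v => (S v)ˣ) (Monoid.CoprodI.of u)) :
      (GraphProduct G S)ˣ) : GraphProduct G S) = _
    rw [GPW.phiU_mk_of]
    rfl
  · exact GPW.core_eq_units G hcc hlc
end

section
/- Let Γ = (V,E) be a coconnected graph with |V| ≥ 2 and (S_v)_{v∈V} nontrivial right LCM monoids. Then for s,t ∈ S_Γ, s is core related to t (sa = tb for some a,b ∈ (S_Γ)_c) if and only if s ∈ tS_Γ*. -/
section Aux

attribute [local instance] Classical.propDecidable

/-- In a left cancellative monoid, both factors of a unit are units. -/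
lemma isUnit_of_mul_isUnit' {M : Type*} [Monoid M] (hlc : LeftCancellative M)
    {a b : M} (h : IsUnit (a * b)) : IsUnit a ∧ IsUnit b := by
  obtain ⟨u, hu⟩ := h.exists_right_inv
  have h1 : a * (b * u) = 1 := by rw [← mul_assoc]; exact hu
  have h2 : (b * u) * a = 1 := by
    have : a * ((b * u) * a) = a * 1 := by
      rw [← mul_assoc, h1, one_mul, mul_one]
    exact hlc _ _ _ this
  have ha : IsUnit a := ⟨⟨a, b * u, h1, h2⟩, rfl⟩
  refine ⟨ha, ?_⟩
  have hb : b = ↑ha.unit⁻¹ * (a * b) := by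
    rw [← mul_assoc]
    have : (↑ha.unit⁻¹ : M) * a = 1 := ha.val_inv_mul
    rw [this, one_mul]
  rw [hb]
  exact (Units.isUnit _).mul h

/-- Any unit belongs to the core. -/
lemma isUnit_mem_core {M : Type*} [Monoid M] {x : M} (hx : IsUnit x) : x ∈ core M := by
  intro s hOrth
  have hs : s ∈ pIdeal x ∩ pIdeal s :=
    ⟨⟨↑hx.unit⁻¹ * s, by show x * (↑hx.unit⁻¹ * s) = s; rw [← mul_assoc, hx.mul_val_inv, one_mul]⟩,
      ⟨1, mul_one s⟩⟩
  rw [Orth] at hOrth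
  rw [hOrth] at hs
  exact hs

/-- A connected graph on a nontrivial vertex set: every vertex has a neighbour. -/
lemma exists_compl_neighbor {V : Type*} [Nontrivial V] {G : SimpleGraph V}
    (hcc : Gᶜ.Connected) (v : V) : ∃ w, v ≠ w ∧ ¬ G.Adj v w := by
  obtain ⟨v', hv'⟩ := exists_ne v
  obtain ⟨p⟩ := hcc.preconnected v v'
  cases p with
  | nil => exact absurd rfl (Ne.symm hv')
  | cons h q =>
    rw [SimpleGraph.compl_adj] at h
    exact ⟨_, h.1, h.2⟩

/-- Splitting a list at the first element failing a predicate. -/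
lemma list_first_fail {α : Type*} (Q : α → Prop) :
    ∀ l : List α, (∀ p ∈ l, Q p) ∨
      ∃ l₁ p l₂, l = l₁ ++ p :: l₂ ∧ (∀ q ∈ l₁, Q q) ∧ ¬ Q p := by
  intro l
  induction l with
  | nil => exact Or.inl (by simp)
  | cons a l ih =>
    by_cases ha : Q a
    · rcases ih with h | ⟨l₁, p, l₂, rfl, h₁, hp⟩
      · refine Or.inl ?_
        intro q hq
        rcases List.mem_cons.1 hq with rfl | hq
        · exact ha
        · exact h q hq
      · refine Or.inr ⟨a :: l₁, p, l₂, rfl, ?_, hp⟩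
        intro q hq
        rcases List.mem_cons.1 hq with rfl | hq
        · exact ha
        · exact h₁ q hq
    · exact Or.inr ⟨[], a, l, rfl, by simp, ha⟩

variable {V : Type*} (G : SimpleGraph V) (S : V → Type*) [∀ v, Monoid (S v)]

/-- The blocking action of a letter on the monoid `S w`. -/
noncomputable def actF (w : V) {z : V} (g : S z) : S w → S w :=
  if h : z = w then fun c => (h ▸ g) * c
  else if G.Adj z w ∨ IsUnit g then id else fun _ => 1

lemma actF_self (w : V) (g : S w) : actF G S w g = fun c => g * c := by
  rw [actF, dif_pos rfl]

lemma actF_id {w z : V} (hzw : z ≠ w) {g : S z} (h : G.Adj z w ∨ IsUnit g) :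
    actF G S w g = id := by
  rw [actF, dif_neg hzw, if_pos h]

lemma actF_block {w z : V} (hzw : z ≠ w) (hadj : ¬ G.Adj z w) {g : S z} (hg : ¬ IsUnit g) :
    actF G S w g = fun _ => 1 := by
  rw [actF, dif_neg hzw, if_neg]
  rintro (h | h)
  exacts [hadj h, hg h]

lemma actF_cases {w z : V} (hzw : z ≠ w) (g : S z) :
    actF G S w g = id ∨ actF G S w g = fun _ => 1 := by
  rw [actF, dif_neg hzw]
  split
  · exact Or.inl rfl
  · exact Or.inr rfl

/-- The blocking action as a monoid hom on each vertex monoid. -/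
noncomputable def actHom (hlc : ∀ v, LeftCancellative (S v)) (w z : V) :
    S z →* Function.End (S w) where
  toFun g := actF G S w g
  map_one' := by
    show actF G S w (1 : S z) = (1 : Function.End (S w))
    rw [Function.End.one_def]
    by_cases h : z = w
    · subst h
      rw [actF_self]
      funext c
      exact one_mul c
    · rw [actF_id G S h (Or.inr isUnit_one)]
  map_mul' g₁ g₂ := by
    funext c
    show actF G S w (g₁ * g₂) c = actF G S w g₁ (actF G S w g₂ c)
    by_cases h : z = w
    · subst h
      rw [actF_self, actF_self, actF_self]
      exact mul_assoc g₁ g₂ c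
    · by_cases hadj : G.Adj z w
      · rw [actF_id G S h (Or.inl hadj), actF_id G S h (Or.inl hadj),
          actF_id G S h (Or.inl hadj)]
        rfl
      · by_cases h1 : IsUnit g₁ <;> by_cases h2 : IsUnit g₂
        · rw [actF_id G S h (Or.inr h1), actF_id G S h (Or.inr h2),
            actF_id G S h (Or.inr (h1.mul h2))]
          rfl
        · have hn : ¬ IsUnit (g₁ * g₂) := fun hu => h2 (isUnit_of_mul_isUnit' (hlc z) hu).2
          rw [actF_block G S h hadj hn, actF_id G S h (Or.inr h1), actF_block G S h hadj h2]
          rfl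
        · have hn : ¬ IsUnit (g₁ * g₂) := fun hu => h1 (isUnit_of_mul_isUnit' (hlc z) hu).1
          rw [actF_block G S h hadj hn, actF_block G S h hadj h1, actF_id G S h (Or.inr h2)]
        · have hn : ¬ IsUnit (g₁ * g₂) := fun hu => h1 (isUnit_of_mul_isUnit' (hlc z) hu).1
          rw [actF_block G S h hadj hn, actF_block G S h hadj h1, actF_block G S h hadj h2]

lemma actHom_comm (hlc : ∀ v, LeftCancellative (S v)) (w : V) {v₀ w₀ : V}
    (hadj : G.Adj v₀ w₀) (s : S v₀) (t : S w₀) :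
    actHom G S hlc w v₀ s * actHom G S hlc w w₀ t
      = actHom G S hlc w w₀ t * actHom G S hlc w v₀ s := by
  have hne : v₀ ≠ w₀ := hadj.ne
  show actF G S w s ∘ actF G S w t = actF G S w t ∘ actF G S w s
  by_cases h1 : v₀ = w
  · subst h1
    have h2 : w₀ ≠ v₀ := hne.symm
    rw [actF_id G S h2 (Or.inl hadj.symm)]
    rfl
  · by_cases h2 : w₀ = w
    · subst h2
      rw [actF_id G S h1 (Or.inl hadj)]
      rfl
    · rcases actF_cases G S h1 s with hs | hs <;> rcases actF_cases G S h2 t with ht | ht <;>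
        rw [hs, ht] <;> rfl

/-- The blocking action on the whole graph product. -/
noncomputable def gpHom (hlc : ∀ v, LeftCancellative (S v)) (w : V) :
    GraphProduct G S →* Function.End (S w) :=
  (graphProductCon G S).lift (Monoid.CoprodI.lift (fun z => actHom G S hlc w z)) (by
    apply Con.conGen_le.2
    rintro x y ⟨v₀, w₀, s, t, hadj, rfl, rfl⟩
    rw [Con.ker_rel]
    simp only [map_mul, Monoid.CoprodI.lift_of]
    exact actHom_comm G S hlc w hadj s t)

lemma gpHom_mk (hlc : ∀ v, LeftCancellative (S v)) (w : V) (x : Monoid.CoprodI S) :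
    gpHom G S hlc w (GraphProduct.mk G S x)
      = Monoid.CoprodI.lift (fun z => actHom G S hlc w z) x :=
  Con.lift_mk' _ _

lemma gpHom_mk_of (hlc : ∀ v, LeftCancellative (S v)) (w z : V) (g : S z) :
    gpHom G S hlc w (GraphProduct.mk G S (Monoid.CoprodI.of g)) = actF G S w g := by
  rw [gpHom_mk, Monoid.CoprodI.lift_of]
  rfl

/-- Every element of the graph product is a product of images of letters. -/
lemma exists_word (x : GraphProduct G S) :
    ∃ l : List (Σ v, S v),
      x = (l.map (fun p => GraphProduct.mk G S (Monoid.CoprodI.of p.2))).prod := by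
  obtain ⟨c, rfl⟩ := Con.mk'_surjective (c := graphProductCon G S) x
  induction c using Monoid.CoprodI.induction_on with
  | one => exact ⟨[], by simp; rfl⟩
  | of i m =>
    refine ⟨[⟨i, m⟩], ?_⟩
    simp only [List.map_cons, List.map_nil, List.prod_cons, List.prod_nil, mul_one]
    rfl
  | mul a b hx hy =>
    obtain ⟨lx, hlx⟩ := hx
    obtain ⟨ly, hly⟩ := hy
    refine ⟨lx ++ ly, ?_⟩
    rw [map_mul, hlx, hly, List.map_append, List.prod_append]
    rfl

/-- Core elements of the graph product are units. -/
lemma isUnit_of_mem_core {V : Type*} [Nontrivial V] (G : SimpleGraph V) (hcc : Gᶜ.Connected)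
    (S : V → Type*) [∀ v, Monoid (S v)] [∀ v, Nontrivial (S v)]
    (hlc : ∀ v, LeftCancellative (S v)) {a : GraphProduct G S}
    (ha : a ∈ core (GraphProduct G S)) : IsUnit a := by
  by_contra hna
  obtain ⟨l, rfl⟩ := exists_word G S a
  set F : (Σ v, S v) → GraphProduct G S :=
    fun p => GraphProduct.mk G S (Monoid.CoprodI.of p.2) with hF
  rcases list_first_fail (fun p : Σ v, S v => IsUnit p.2) l with hall | ⟨l₁, p, l₂, rfl, h₁, hp⟩
  · refine hna (List.prod_isUnit ?_)
    intro m hm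
    obtain ⟨q, hq, rfl⟩ := List.mem_map.1 hm
    exact (hall q hq).map ((GraphProduct.mk G S).comp Monoid.CoprodI.of)
  · obtain ⟨w, hvw, hadj⟩ := exists_compl_neighbor hcc p.1
    obtain ⟨γ, hγ⟩ := exists_ne (1 : S w)
    set u := (l₁.map F).prod with hu_def
    set A := ((p :: l₂).map F).prod with hA_def
    have hu : IsUnit u := by
      refine List.prod_isUnit ?_
      intro m hm
      obtain ⟨q, hq, rfl⟩ := List.mem_map.1 hm
      exact (h₁ q hq).map ((GraphProduct.mk G S).comp Monoid.CoprodI.of)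
    have hsplit : ((l₁ ++ p :: l₂).map F).prod = u * A := by
      rw [List.map_append, List.prod_append]
    have block : ∀ y : GraphProduct G S, gpHom G S hlc w (A * y) 1 = 1 := by
      intro y
      have hA2 : A * y = F p * ((l₂.map F).prod * y) := by
        rw [hA_def, List.map_cons, List.prod_cons, mul_assoc]
      rw [hA2, map_mul]
      change gpHom G S hlc w (F p) (gpHom G S hlc w ((l₂.map F).prod * y) 1) = 1
      rw [hF,
        gpHom_mk_of G S hlc w p.1 p.2, actF_block G S hvw hadj hp]
    refine ha (u * (F ⟨w, γ⟩ * A)) ?_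
    rw [Orth, Set.eq_empty_iff_forall_notMem]
    rintro x ⟨⟨r, hr⟩, ⟨r', hr'⟩⟩
    simp only at hr hr'
    rw [hsplit] at hr
    have h0 : u * (A * r) = u * (F ⟨w, γ⟩ * A * r') := by
      rw [← mul_assoc, hr, ← mul_assoc, ← mul_assoc] at *
      rw [hr']
    have heq : A * r = F ⟨w, γ⟩ * A * r' := hu.mul_left_cancel h0
    have lhs : gpHom G S hlc w (A * r) 1 = 1 := block r
    have rhs : gpHom G S hlc w (F ⟨w, γ⟩ * A * r') 1 = γ := by
      rw [mul_assoc, map_mul]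
      change gpHom G S hlc w (F ⟨w, γ⟩) (gpHom G S hlc w (A * r') 1) = γ
      rw [block r', hF,
        gpHom_mk_of G S hlc w w γ, actF_self]
      exact mul_one γ
    rw [heq, rhs] at lhs
    exact hγ lhs

end Aux

/-- Theorem 3.2(ii): for a coconnected graph with at least two vertices and nontrivial
right LCM vertex monoids, two elements of the graph product are core related iff they
differ by right multiplication by a unit. -/
theorem coreRel_of_coconnected_graph_product {V : Type*} [Countable V] [Nontrivial V]
    (G : SimpleGraph V) (hcc : Gᶜ.Connected)
    (S : V → Type*) [∀ v, Monoid (S v)] [∀ v, Nontrivial (S v)]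
    (hlc : ∀ v, LeftCancellative (S v)) (hlcm : ∀ v, IsRightLCM (S v)) :
    ∀ s t : GraphProduct G S,
      coreRel s t ↔ ∃ x : GraphProduct G S, IsUnit x ∧ s = t * x := by
  intro s t
  constructor
  · rintro ⟨a, ha, b, hb, hab⟩
    have hua := isUnit_of_mem_core G hcc S hlc ha
    have hub := isUnit_of_mem_core G hcc S hlc hb
    refine ⟨b * ↑hua.unit⁻¹, hub.mul (Units.isUnit _), ?_⟩
    calc s = s * (a * ↑hua.unit⁻¹) := by rw [hua.mul_val_inv, mul_one]
    _ = (s * a) * ↑hua.unit⁻¹ := by rw [mul_assoc]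
    _ = (t * b) * ↑hua.unit⁻¹ := by rw [hab]
    _ = t * (b * ↑hua.unit⁻¹) := by rw [mul_assoc]
  · rintro ⟨x, hx, rfl⟩
    exact ⟨1, isUnit_mem_core isUnit_one, x, isUnit_mem_core hx, by rw [mul_one]⟩
end
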